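/- arXiv:0807.2626 — 9 statements merged into one kernel-verified Lean document; each statement's English description precedes it below -/
import Mathlib

section
/- For every complex number s with Re(s) > 1 and every complex α with |α| < 1, the Hurwitz-type series ∑_{n≥1} (n+α)^{-s} equals ζ(s) + ∑_{n≥1} ((-1)^n/n!) · s(s+1)⋯(s+n-1) · ζ(s+n) · α^n. -/
open Complex Finset

private lemma hse_iter_deriv (s w : ℂ) (n : ℕ) {z : ℂ} (hz : 0 < (w + z).re) :
    iteratedDeriv n (fun z : ℂ => (w + z) ^ (-s)) z
      = (∏ i ∈ Finset.range n, (-s - i)) * (w + z) ^ (-s - n) := by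
  induction n generalizing z with
  | zero => simp
  | succ n ih =>
    rw [iteratedDeriv_succ]
    have hU : IsOpen {z : ℂ | 0 < (w + z).re} :=
      isOpen_lt continuous_const (Complex.continuous_re.comp (by continuity))
    have hev : iteratedDeriv n (fun z : ℂ => (w + z) ^ (-s))
        =ᶠ[nhds z] fun y => (∏ i ∈ Finset.range n, (-s - i)) * (w + y) ^ (-s - n) := by
      filter_upwards [hU.mem_nhds hz] with y hy using ih hy
    rw [hev.deriv_eq]
    have h1 : HasDerivAt (fun y : ℂ => w + y) 1 z := (hasDerivAt_id z).const_add w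
    have hd : HasDerivAt (fun y : ℂ => (w + y) ^ (-s - n))
        ((-s - n) * (w + z) ^ (-s - n - 1) * 1) z :=
      h1.cpow_const (Complex.mem_slitPlane_iff.mpr (Or.inl hz))
    rw [((hd.const_mul _).deriv)]
    rw [Finset.prod_range_succ]
    rw [show -s - ((n + 1 : ℕ) : ℂ) = -s - n - 1 from by push_cast; ring]
    ring

private lemma hse_hasSum_w (s α : ℂ) (hα : ‖α‖ < 1) (w : ℂ) (hw : 1 ≤ w.re) :
    HasSum (fun n : ℕ => ((n.factorial : ℂ))⁻¹ * (∏ i ∈ Finset.range n, (-s - i))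
        * w ^ (-s - n) * α ^ n) ((w + α) ^ (-s)) := by
  have hre : ∀ z : ℂ, z ∈ Metric.ball (0:ℂ) 1 → 0 < (w + z).re := by
    intro z hz
    rw [mem_ball_zero_iff] at hz
    have h1 : |z.re| ≤ ‖z‖ := Complex.abs_re_le_norm z
    have h2 : (w + z).re = w.re + z.re := by simp
    rw [h2]
    rcases abs_le.mp h1 with ⟨h3, h4⟩
    linarith
  have hdiff : DifferentiableOn ℂ (fun z : ℂ => (w + z) ^ (-s)) (Metric.ball 0 1) := by
    intro z hz
    exact (((hasDerivAt_id z).const_add w).cpow_const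
      (Complex.mem_slitPlane_iff.mpr (Or.inl (hre z hz)))).differentiableAt.differentiableWithinAt
  have H := Complex.hasSum_taylorSeries_on_ball hdiff (mem_ball_zero_iff.mpr hα)
  have e : (fun n : ℕ => ((n.factorial : ℂ))⁻¹ * (∏ i ∈ Finset.range n, (-s - i))
      * w ^ (-s - n) * α ^ n) = fun n : ℕ => ((n.factorial : ℂ))⁻¹ • (α - 0) ^ n •
      iteratedDeriv n (fun z : ℂ => (w + z) ^ (-s)) 0 := by
    funext n
    rw [hse_iter_deriv s w n (hre 0 (by simp))]
    simp only [add_zero, sub_zero, smul_eq_mul]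
    ring
  rw [e]; exact H

private lemma hse_summable_b (c r : ℝ) (hc : 0 < c) (hr0 : 0 < r) (hr : r < 1) :
    Summable (fun n : ℕ => ((n.factorial : ℝ))⁻¹ * (∏ i ∈ Finset.range n, (c + i)) * r ^ n) := by
  set b : ℕ → ℝ := fun n => ((n.factorial : ℝ))⁻¹ * (∏ i ∈ Finset.range n, (c + i)) * r ^ n with hb
  have hpos : ∀ n, 0 < b n := by
    intro n
    refine mul_pos (mul_pos (by positivity) ?_) (by positivity)
    exact Finset.prod_pos fun i _ => by positivity
  have hrec : ∀ n : ℕ, b (n + 1) = b n * ((c + n) * r / (n + 1)) := by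
    intro n
    simp only [hb, Nat.factorial_succ, Finset.prod_range_succ, pow_succ]
    push_cast
    field_simp
  have hratio : Filter.Tendsto (fun n : ℕ => ‖b (n + 1)‖ / ‖b n‖) Filter.atTop (nhds r) := by
    have h1 : ∀ n : ℕ, ‖b (n + 1)‖ / ‖b n‖ = (c - 1) * (1 / (n + 1)) * r + r := by
      intro n
      rw [Real.norm_eq_abs, Real.norm_eq_abs, abs_of_pos (hpos _), abs_of_pos (hpos _), hrec,
        mul_comm (b n), mul_div_assoc _ (b n), div_self (ne_of_gt (hpos n)), mul_one]
      have hn1 : ((n : ℝ) + 1) ≠ 0 := by positivity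
      field_simp
      ring
    simp only [h1]
    have h2 := (tendsto_one_div_add_atTop_nhds_zero_nat.const_mul (c - 1)).mul_const r
    simpa using h2.add_const r
  exact summable_of_ratio_test_tendsto_lt_one hr
    (Filter.Eventually.of_forall fun n => ne_of_gt (hpos n)) hratio

private lemma hse_neg_prod (s : ℂ) (k : ℕ) : (∏ i ∈ Finset.range k, (-s - (i:ℂ)))
    = (-1)^k * ∏ i ∈ Finset.range k, (s + (i:ℂ)) := by
  calc ∏ i ∈ Finset.range k, (-s - (i:ℂ))
      = ∏ i ∈ Finset.range k, (-1 * (s + (i:ℂ))) :=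
        Finset.prod_congr rfl (fun i _ => by ring)
    _ = (-1)^k * ∏ i ∈ Finset.range k, (s + (i:ℂ)) := by
        rw [Finset.prod_mul_distrib, Finset.prod_const, Finset.card_range]

/-- For `Re s > 1` and `|α| < 1`, the Hurwitz-type series `∑_{n≥1} (n+α)^{-s}` equals
`ζ(s) + ∑_{n≥1} ((-1)^n/n!) s(s+1)⋯(s+n-1) ζ(s+n) α^n`. -/
theorem hurwitz_series_expansion (s α : ℂ) (hs : 1 < s.re) (hα : ‖α‖ < 1) :
    ∑' n : ℕ, ((n : ℂ) + 1 + α) ^ (-s) =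
      riemannZeta s +
        ∑' n : ℕ, ((-1) ^ (n + 1) / ((n + 1).factorial : ℂ)) *
          (∏ i ∈ Finset.range (n + 1), (s + i)) * riemannZeta (s + (n + 1)) * α ^ (n + 1) := by
  rcases eq_or_ne α 0 with rfl | hα0
  · rw [zeta_eq_tsum_one_div_nat_add_one_cpow hs]
    simp [cpow_neg, one_div]
  set σ := s.re with hσ
  have hσ1 : 1 < σ := hs
  have hsnorm : 1 < ‖s‖ := by
    have h1 := Complex.abs_re_le_norm s
    have h2 := le_abs_self s.re
    linarith
  have hα1 : 0 < ‖α‖ := norm_pos_iff.mpr hα0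
  set P : ℕ → ℂ := fun n => ∏ i ∈ Finset.range n, (-s - i) with hP
  set f : ℕ → ℕ → ℂ := fun n m =>
    (((n.factorial : ℂ))⁻¹ * P n * α ^ n) * ((m:ℂ) + 1) ^ (-s - n) with hf
  set a : ℕ → ℝ := fun n =>
    ((n.factorial : ℝ))⁻¹ * (∏ i ∈ Finset.range n, (‖s‖ + i)) * ‖α‖ ^ n with ha
  have hb : Summable a := hse_summable_b ‖s‖ ‖α‖ (by linarith) hα1 hα
  -- norms
  have hcpownorm : ∀ (c : ℂ) (m n : ℕ), ‖((m:ℂ)+1) ^ (-c - n)‖ = ((m:ℝ)+1) ^ (-c.re - n) := by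
    intro c m n
    rw [show ((m:ℂ)+1) = ((((m:ℝ)+1) : ℝ) : ℂ) by push_cast; ring,
      Complex.norm_cpow_eq_rpow_re_of_pos (by positivity)]
    simp
  have hPle : ∀ n, ‖P n‖ ≤ ∏ i ∈ Finset.range n, (‖s‖ + i) := by
    intro n
    rw [hP, norm_prod]
    refine Finset.prod_le_prod (fun i _ => norm_nonneg _) (fun i _ => ?_)
    calc ‖-s - (i:ℂ)‖ = ‖s + (i:ℂ)‖ := by rw [show -s - (i:ℂ) = -(s + i) by ring, norm_neg]
      _ ≤ ‖s‖ + ‖(i:ℂ)‖ := norm_add_le _ _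
      _ = ‖s‖ + i := by rw [Complex.norm_natCast]
  have hnorm : ∀ n m, ‖f n m‖
      = (((n.factorial : ℝ))⁻¹ * ‖P n‖ * ‖α‖ ^ n) * ((m:ℝ)+1) ^ (-σ - n) := by
    intro n m
    rw [hf]
    simp only [norm_mul, norm_inv, norm_pow, Complex.norm_natCast, hcpownorm s m n]
    rfl
  have hkey : ∀ p : ℝ, 1 < p → Summable (fun m : ℕ => ((m:ℝ)+1) ^ (-p)) := by
    intro p hp
    have h := Real.summable_nat_rpow.mpr (show -p < -1 by linarith)
    exact ((summable_nat_add_iff 1).mpr h).congr fun m => by push_cast; ring_nf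
  have hrowS : ∀ n : ℕ, Summable (fun m : ℕ => ((m:ℝ)+1) ^ (-σ - (n:ℝ))) := by
    intro n
    have := hkey (σ + n) (by have := Nat.cast_nonneg (α := ℝ) n; linarith)
    exact this.congr fun m => by rw [neg_add]; ring_nf
  set C : ℝ := ∑' m : ℕ, ((m:ℝ)+1) ^ (-σ) with hC
  have hrowle : ∀ n : ℕ, ∑' m : ℕ, ((m:ℝ)+1) ^ (-σ - (n:ℝ)) ≤ C := by
    intro n
    refine Summable.tsum_le_tsum (fun m => ?_) (hrowS n) (hkey σ hσ1)
    refine Real.rpow_le_rpow_of_exponent_le (by push_cast; linarith [Nat.cast_nonneg (α := ℝ) m]) ?_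
    have := Nat.cast_nonneg (α := ℝ) n; linarith
  have hfnormS : ∀ n, Summable fun m => ‖f n m‖ := by
    intro n
    refine ((hrowS n).mul_left _).congr fun m => (hnorm n m).symm
  have hcoef_nonneg : ∀ n, (0:ℝ) ≤ ((n.factorial : ℝ))⁻¹ * ‖P n‖ * ‖α‖ ^ n := by
    intro n; positivity
  have hcoef_le : ∀ n, ((n.factorial : ℝ))⁻¹ * ‖P n‖ * ‖α‖ ^ n ≤ a n := by
    intro n
    rw [ha]
    have h1 : (0:ℝ) ≤ ((n.factorial : ℝ))⁻¹ := by positivity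
    have h2 : (0:ℝ) ≤ ‖α‖ ^ n := by positivity
    exact mul_le_mul_of_nonneg_right (mul_le_mul_of_nonneg_left (hPle n) h1) h2
  have hColBound : ∀ n, ∑' m, ‖f n m‖ ≤ a n * C := by
    intro n
    calc ∑' m, ‖f n m‖
        = ∑' m : ℕ, (((n.factorial : ℝ))⁻¹ * ‖P n‖ * ‖α‖ ^ n) * ((m:ℝ)+1) ^ (-σ - (n:ℝ)) :=
          tsum_congr fun m => hnorm n m
      _ = (((n.factorial : ℝ))⁻¹ * ‖P n‖ * ‖α‖ ^ n) * ∑' m : ℕ, ((m:ℝ)+1) ^ (-σ - (n:ℝ)) :=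
          tsum_mul_left
      _ ≤ a n * C := by
          have h3 : (0:ℝ) ≤ ∑' m : ℕ, ((m:ℝ)+1) ^ (-σ - (n:ℝ)) :=
            tsum_nonneg fun m => Real.rpow_nonneg (by positivity) _
          have h4 := hrowle n
          have h5 := hcoef_le n
          have h6 := hcoef_nonneg n
          have h7 : (0:ℝ) ≤ a n := le_trans h6 h5
          have h8 : (0:ℝ) ≤ C := le_trans h3 h4
          nlinarith
  have hFnorm : Summable fun p : ℕ × ℕ => ‖Function.uncurry f p‖ := by
    rw [summable_prod_of_nonneg (fun p => norm_nonneg _)]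
    refine ⟨fun n => hfnormS n, ?_⟩
    refine Summable.of_nonneg_of_le (fun n => tsum_nonneg fun m => norm_nonneg _)
      (fun n => hColBound n) (hb.mul_right C)
  have hF : Summable (Function.uncurry f) := hFnorm.of_norm
  -- row sums (over n, for fixed m)
  have hrow : ∀ m : ℕ, HasSum (fun n => f n m) (((m:ℂ) + 1 + α) ^ (-s)) := by
    intro m
    have hw : 1 ≤ ((m:ℂ)+1).re := by
      simp only [Complex.add_re, Complex.natCast_re, Complex.one_re]
      linarith [Nat.cast_nonneg (α := ℝ) m]
    have h := hse_hasSum_w s α hα ((m:ℂ)+1) hw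
    have heq : (fun n : ℕ => ((n.factorial : ℂ))⁻¹ * (∏ i ∈ Finset.range n, (-s - i))
        * ((m:ℂ)+1) ^ (-s - n) * α ^ n) = fun n => f n m := by
      funext n; rw [hf, hP]; ring
    rwa [heq] at h
  -- zeta column sums
  have hzeta : ∀ n : ℕ, ∑' m : ℕ, ((m:ℂ)+1) ^ (-s - n) = riemannZeta (s + n) := by
    intro n
    rw [zeta_eq_tsum_one_div_nat_add_one_cpow
      (by simp only [Complex.add_re, Complex.natCast_re]; linarith [Nat.cast_nonneg (α := ℝ) n])]
    refine tsum_congr fun m => ?_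
    rw [show -s - (n:ℂ) = -(s + n) by ring, cpow_neg, one_div]
  have hcol : ∀ n : ℕ, ∑' m : ℕ, f n m
      = (((n.factorial : ℂ))⁻¹ * P n * α ^ n) * riemannZeta (s + n) := by
    intro n
    rw [hf]
    rw [tsum_mul_left, hzeta n]
  set g : ℕ → ℂ := fun n => (((n.factorial : ℂ))⁻¹ * P n * α ^ n) * riemannZeta (s + n) with hg
  have hgS : Summable g := by
    refine Summable.of_norm_bounded (g := fun n => ∑' m, ‖f n m‖)
      (by rw [summable_prod_of_nonneg (fun p => norm_nonneg _)] at hFnorm; exact hFnorm.2)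
      fun n => ?_
    simp only [hg]
    rw [← hcol n]
    exact norm_tsum_le_tsum_norm (hfnormS n)
  have hswap : ∑' (m : ℕ) (n : ℕ), f n m = ∑' (n : ℕ) (m : ℕ), f n m := Summable.tsum_comm hF
  calc ∑' m : ℕ, ((m : ℂ) + 1 + α) ^ (-s)
      = ∑' (m : ℕ) (n : ℕ), f n m := tsum_congr fun m => (hrow m).tsum_eq.symm
    _ = ∑' (n : ℕ) (m : ℕ), f n m := hswap
    _ = ∑' n : ℕ, g n := tsum_congr fun n => hcol n
    _ = g 0 + ∑' n : ℕ, g (n + 1) := Summable.tsum_eq_zero_add hgS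
    _ = riemannZeta s + ∑' n : ℕ, ((-1) ^ (n + 1) / ((n + 1).factorial : ℂ)) *
          (∏ i ∈ Finset.range (n + 1), (s + i)) * riemannZeta (s + (n + 1)) * α ^ (n + 1) := by
        congr 1
        · simp [hg, hP]
        · refine tsum_congr fun n => ?_
          simp only [hg, hP]
          rw [hse_neg_prod s (n + 1)]
          rw [show s + ((n + 1 : ℕ) : ℂ) = s + ((n : ℂ) + 1) by push_cast; ring]
          ring
end

section
/- For every integer k ≥ 1, every complex s with Re(s) > 1, and every complex α with |α| < k, the series ∑_{n≥k} (n+α)^{-s} equals ζ_k(s) + ∑_{n≥1} ((-1)^n/n!) · s(s+1)⋯(s+n-1) · ζ_k(s+n) · α^n, where ζ_k(s) = ∑_{n≥k} n^{-s}. -/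
open Complex Finset

open Filter Topology

noncomputable def binCoeff (w : ℂ) (j : ℕ) : ℂ :=
  (∏ i ∈ Finset.range j, (w - i)) / j.factorial

lemma binCoeff_zero (w : ℂ) : binCoeff w 0 = 1 := by simp [binCoeff]

lemma binCoeff_succ (w : ℂ) (j : ℕ) :
    binCoeff w (j + 1) = binCoeff w j * (w - j) / (j + 1) := by
  rw [binCoeff, binCoeff, Finset.prod_range_succ, Nat.factorial_succ]
  push_cast
  rw [div_mul_eq_mul_div, div_div, mul_comm ((j:ℂ)+1)]

lemma binCoeff_ne_zero {w : ℂ} (hw : ∀ i : ℕ, w - i ≠ 0) (j : ℕ) : binCoeff w j ≠ 0 := by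
  induction j with
  | zero => simp [binCoeff_zero]
  | succ n ih =>
    rw [binCoeff_succ]
    exact div_ne_zero (mul_ne_zero ih (hw n)) (Nat.cast_add_one_ne_zero n)

lemma binCoeff_ratio {w : ℂ} (hw : ∀ i : ℕ, w - i ≠ 0) :
    Tendsto (fun j : ℕ => ‖binCoeff w (j + 1)‖ / ‖binCoeff w j‖) atTop (𝓝 1) := by
  have key : Tendsto (fun j : ℕ => (w - j) / ((j : ℂ) + 1)) atTop (𝓝 (-1)) := by
    have h0 : Tendsto (fun j : ℕ => (w + 1) / ((j : ℂ) + 1)) atTop (𝓝 0) := by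
      rw [tendsto_zero_iff_norm_tendsto_zero]
      have : (fun j : ℕ => ‖(w + 1) / ((j : ℂ) + 1)‖) = fun j : ℕ => ‖w + 1‖ / ((j : ℝ) + 1) := by
        funext j
        rw [norm_div]
        congr 1
        simpa using Complex.norm_natCast (j + 1)
      rw [this]
      have := tendsto_const_div_atTop_nhds_zero_nat (C := ‖w + 1‖)
      have h' := (tendsto_add_atTop_iff_nat 1).mpr this
      simpa [Nat.cast_add] using h'
    have : (fun j : ℕ => (w - j) / ((j : ℂ) + 1)) =
        fun j : ℕ => (w + 1) / ((j : ℂ) + 1) - 1 := by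
      funext j
      have h2 : ((j:ℂ) + 1) ≠ 0 := Nat.cast_add_one_ne_zero j
      field_simp
      ring
    rw [this]
    simpa using h0.sub_const 1
  have hn := key.norm
  simp only [norm_neg, norm_one] at hn
  have heq : ∀ j : ℕ, ‖binCoeff w (j + 1)‖ / ‖binCoeff w j‖ = ‖(w - j) / ((j : ℂ) + 1)‖ := by
    intro j
    have hb : ‖binCoeff w j‖ ≠ 0 := norm_ne_zero_iff.mpr (binCoeff_ne_zero hw j)
    have hb' : ‖binCoeff w j‖ ≠ 0 := hb
    rw [binCoeff_succ, norm_div, norm_mul, norm_div]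
    rw [div_right_comm, mul_div_cancel_left₀ _ hb]
  simp_rw [heq]
  exact hn
theorem hasSum_binomial {w : ℂ} (hw : ∀ i : ℕ, w - i ≠ 0) {z : ℂ} (hz : ‖z‖ < 1) :
    HasSum (fun j : ℕ => binCoeff w j * z ^ j) ((1 + z) ^ w) := by
  set f : ℂ → ℂ := fun z => (1 + z) ^ w with hf
  set p := FormalMultilinearSeries.ofScalars ℂ (binCoeff w) with hp
  have hrad : p.radius = 1 := by
    have := FormalMultilinearSeries.ofScalars_radius_eq_inv_of_tendsto ℂ (binCoeff w)
      (r := 1) one_ne_zero (by simpa using binCoeff_ratio hw)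
    simpa using this
  have hball : HasFPowerSeriesOnBall p.sum p 0 1 := by
    have := p.hasFPowerSeriesOnBall (by rw [hrad]; norm_num)
    rwa [hrad] at this
  set S : Set ℂ := Metric.eball (0 : ℂ) 1 with hS
  have hSM : S = Metric.ball (0 : ℂ) 1 := by
    rw [hS, ← ENNReal.coe_one, Metric.eball_coe]
    norm_num
  have hSopen : IsOpen S := EMetric.isOpen_ball
  have hmemS : ∀ x : ℂ, ‖x‖ < 1 → x ∈ S := by
    intro x hx
    rw [hSM]
    simpa [Metric.mem_ball, dist_zero_right] using hx
  have hre : ∀ x ∈ S, 0 < ((1 : ℂ) + x).re := by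
    intro x hx
    rw [hSM, Metric.mem_ball, dist_zero_right] at hx
    have h1 : -‖x‖ ≤ x.re := neg_abs_le x.re |>.trans' (by
      have := Complex.abs_re_le_norm x
      linarith)
    simp only [Complex.add_re, Complex.one_re]
    linarith
  have hslit : ∀ x ∈ S, (1 : ℂ) + x ∈ Complex.slitPlane :=
    fun x hx => Complex.mem_slitPlane_iff.mpr (Or.inl (hre x hx))
  have hf_an : AnalyticOnNhd ℂ f S := by
    intro x hx
    exact (analyticAt_const.add (analyticAt_id)).cpow analyticAt_const (Or.inl (hre x hx))
  have hF_an : AnalyticOnNhd ℂ p.sum S := hball.analyticOnNhd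
  have h0S : (0 : ℂ) ∈ S := hmemS 0 (by norm_num)
  -- iterated derivatives of f on S
  have hiter : ∀ n : ℕ, Set.EqOn (iteratedDeriv n f)
      (fun x => (∏ i ∈ Finset.range n, (w - i)) * (1 + x) ^ (w - n)) S := by
    intro n
    induction n with
    | zero => intro x _; simp [iteratedDeriv_zero, hf]
    | succ n ih =>
      intro x hx
      have hev : iteratedDeriv n f =ᶠ[𝓝 x]
          (fun y => (∏ i ∈ Finset.range n, (w - i)) * (1 + y) ^ (w - n)) :=
        Filter.eventuallyEq_of_mem (hSopen.mem_nhds hx) ih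
      rw [iteratedDeriv_succ, hev.deriv_eq]
      have hd : HasDerivAt (fun y : ℂ => (1 + y) ^ (w - n))
          ((w - n) * (1 + x) ^ (w - n - 1) * 1) x :=
        HasDerivAt.cpow_const ((hasDerivAt_id x).const_add 1) (hslit x hx)
      rw [(hd.const_mul (∏ i ∈ Finset.range n, (w - i))).deriv]
      have hexp : w - ((n : ℂ) + 1) = w - n - 1 := by ring
      rw [Finset.prod_range_succ]
      push_cast
      rw [hexp]
      ring
  -- local power series of f at 0
  obtain ⟨q, hq⟩ := hf_an 0 h0S
  obtain ⟨r, hr⟩ := hq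
  have hq2 : HasFPowerSeriesAt f q 0 := ⟨r, hr⟩
  have hcoeff : ∀ n, q.coeff n = binCoeff w n := by
    intro n
    have h1 := hr.factorial_smul (1 : ℂ) n
    have h2 : iteratedDeriv n f 0 = ∏ i ∈ Finset.range n, (w - i) := by
      have := hiter n h0S
      simpa [Complex.one_cpow] using this
    rw [iteratedDeriv_eq_iteratedFDeriv] at h2
    rw [h2] at h1
    have h3 : q n (fun _ => (1 : ℂ)) = q.coeff n := rfl
    rw [h3] at h1
    have hfac : ((n.factorial : ℂ)) ≠ 0 := Nat.cast_ne_zero.mpr n.factorial_ne_zero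
    rw [binCoeff, ← h1, nsmul_eq_mul]
    field_simp
  have hpcoeff : ∀ n, p.coeff n = binCoeff w n := by
    intro n
    show p n (fun _ => (1 : ℂ)) = binCoeff w n
    rw [hp, FormalMultilinearSeries.ofScalars_apply_eq]
    simp
  have hev0 : f =ᶠ[𝓝 (0 : ℂ)] p.sum := by
    have hFq := hball.hasFPowerSeriesAt
    filter_upwards [hasFPowerSeriesAt_iff'.mp hq2, hasFPowerSeriesAt_iff'.mp hFq] with y h1 h2
    refine h1.unique ?_
    convert h2 using 2 with n
    rw [hcoeff, hpcoeff]
  have hEq : Set.EqOn f p.sum S :=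
    hf_an.eqOn_of_preconnected_of_eventuallyEq hF_an
      (hSM ▸ (convex_ball (0:ℂ) 1).isPreconnected) h0S hev0
  have hzS : z ∈ S := hmemS z hz
  have hsum := hball.hasSum (y := z) (by simpa [hS] using hzS)
  have hterm : (fun n : ℕ => p n (fun _ => z)) = fun n => binCoeff w n * z ^ n := by
    funext n
    rw [hp, FormalMultilinearSeries.ofScalars_apply_eq, smul_eq_mul]
  rw [hterm, zero_add] at hsum
  rwa [← hEq hzS] at hsum

lemma binCoeff_neg (s : ℂ) (j : ℕ) :
    binCoeff (-s) j = ((-1) ^ j / (j.factorial : ℂ)) * ∏ i ∈ Finset.range j, (s + i) := by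
  rw [binCoeff]
  have hprod : ∏ i ∈ Finset.range j, (-s - (i:ℂ)) = ∏ i ∈ Finset.range j, ((-1) * (s + i)) :=
    Finset.prod_congr rfl (fun i _ => by ring)
  rw [hprod, Finset.prod_mul_distrib, Finset.prod_const, Finset.card_range]
  ring

lemma cpow_mul_ofReal (x : ℂ) (hx : x ≠ 0) (r : ℝ) (hr : 0 < r) (t : ℂ) :
    (x * (r : ℂ)) ^ t = x ^ t * (r : ℂ) ^ t := by
  have hr' : ((r : ℂ)) ≠ 0 := by exact_mod_cast hr.ne'
  rw [Complex.cpow_def_of_ne_zero (mul_ne_zero hx hr'), Complex.cpow_def_of_ne_zero hx,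
    Complex.cpow_def_of_ne_zero hr', Complex.log_mul_ofReal r hr x hx, add_mul,
    Complex.exp_add, ← Complex.ofReal_log hr.le]
  ring

/-- `ζ_k(s) = ∑_{n≥k} n^{-s}` for `Re s > 1`. -/
noncomputable def zetaShift (k : ℕ) (s : ℂ) : ℂ := ∑' n : ℕ, ((n : ℂ) + k) ^ (-s)

/-- For an integer `k ≥ 1`, `Re s > 1` and `|α| < k`, the series `∑_{n≥k} (n+α)^{-s}` equals
`ζ_k(s) + ∑_{n≥1} ((-1)^n/n!) s(s+1)⋯(s+n-1) ζ_k(s+n) α^n`. -/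
theorem hurwitz_series_expansion_shift (k : ℕ) (hk : 1 ≤ k) (s α : ℂ) (hs : 1 < s.re)
    (hα : ‖α‖ < k) :
    ∑' n : ℕ, ((n : ℂ) + k + α) ^ (-s) =
      zetaShift k s +
        ∑' n : ℕ, ((-1) ^ (n + 1) / ((n + 1).factorial : ℂ)) *
          (∏ i ∈ Finset.range (n + 1), (s + i)) * zetaShift k (s + (n + 1)) * α ^ (n + 1) := by
  rcases eq_or_ne α 0 with rfl | hα0
  · simp [zetaShift]
  have hk0 : (0:ℝ) < k := by exact_mod_cast hk
  have hw : ∀ i : ℕ, (-s) - (i : ℂ) ≠ 0 := by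
    intro i h
    have h2 := congrArg Complex.re h
    simp only [Complex.sub_re, Complex.neg_re, Complex.natCast_re, Complex.zero_re] at h2
    have hi : (0:ℝ) ≤ (i:ℝ) := i.cast_nonneg
    linarith
  set F2 : ℕ × ℕ → ℂ :=
    fun nj => binCoeff (-s) nj.2 * α ^ nj.2 * ((nj.1 : ℂ) + k) ^ (-(s + nj.2)) with hF2
  have hmpos : ∀ n : ℕ, (0:ℝ) < (n:ℝ) + k := fun n => by positivity
  have hcast : ∀ n : ℕ, ((n : ℂ) + k) = ((((n:ℝ) + k : ℝ)) : ℂ) := fun n => by push_cast; ring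
  have hmc : ∀ n : ℕ, ((n : ℂ) + k) ≠ 0 := by
    intro n h
    rw [hcast n] at h
    exact_mod_cast absurd (Complex.ofReal_eq_zero.mp h) (hmpos n).ne'
  -- Step 1 : pointwise binomial expansion
  have step1 : ∀ n : ℕ, HasSum (fun j : ℕ => F2 (n, j)) (((n : ℂ) + k + α) ^ (-s)) := by
    intro n
    have hnk : ‖((n:ℂ) + k)‖ = (n:ℝ) + k := by
      rw [hcast n, Complex.norm_real, Real.norm_of_nonneg (hmpos n).le]
    have hzlt : ‖α / ((n:ℂ) + k)‖ < 1 := by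
      rw [norm_div, hnk, div_lt_one (hmpos n)]
      have : (k:ℝ) ≤ (n:ℝ) + k := by linarith [Nat.cast_nonneg (α := ℝ) n]
      linarith
    have hbin := hasSum_binomial hw hzlt
    have hsplit : ((n:ℂ) + k + α) ^ (-s) =
        ((n:ℂ) + k) ^ (-s) * (1 + α / ((n:ℂ) + k)) ^ (-s) := by
      have h1z : (1 : ℂ) + α / ((n:ℂ) + k) ≠ 0 := by
        intro h
        have : α = -((n:ℂ) + k) := by
          field_simp [hmc n] at h
          linear_combination h
        rw [this, norm_neg, hnk] at hα
        have : (k:ℝ) ≤ (n:ℝ) + k := by linarith [Nat.cast_nonneg (α := ℝ) n]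
        linarith
      have key : ((n:ℂ) + k + α) = (1 + α / ((n:ℂ) + k)) * ((n:ℂ) + k) := by
        field_simp [hmc n]
      have hc := cpow_mul_ofReal (1 + α / ((n:ℂ) + k)) h1z ((n:ℝ) + k) (hmpos n) (-s)
      rw [← hcast n] at hc
      rw [key, hc]
      ring
    have h2 := hbin.mul_left (((n:ℂ) + k) ^ (-s))
    rw [← hsplit] at h2
    convert h2 using 1
    · rfl
    funext j
    show binCoeff (-s) j * α ^ j * ((n : ℂ) + k) ^ (-(s + j)) =
      ((n:ℂ) + k) ^ (-s) * (binCoeff (-s) j * (α / ((n:ℂ) + k)) ^ j)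
    have hsplit2 : ((n : ℂ) + k) ^ (-(s + (j:ℂ))) =
        ((n:ℂ) + k) ^ (-s) * (((n:ℂ) + k) ^ (j:ℕ))⁻¹ := by
      rw [show -(s + (j:ℂ)) = -s + -(j:ℂ) by ring, Complex.cpow_add _ _ (hmc n)]
      congr 1
      rw [Complex.cpow_neg, Complex.cpow_natCast]
    rw [hsplit2, div_pow]
    field_simp
  -- Step 2: summability of the double series
  set a : ℕ → ℝ := fun n => ((n:ℝ) + k) ^ (-s.re) with ha_def
  set b : ℕ → ℝ := fun j => ‖binCoeff (-s) j‖ * (‖α‖ / k) ^ j with hb_def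
  have hbnonneg : ∀ j, 0 ≤ b j := fun j => by positivity
  have hanonneg : ∀ n, 0 ≤ a n := fun n => Real.rpow_nonneg (hmpos n).le _
  have ha : Summable a := by
    have h1 : Summable (fun n : ℕ => (n:ℝ) ^ (-s.re)) :=
      Real.summable_nat_rpow.mpr (by linarith)
    have h2 := (summable_nat_add_iff k).mpr h1
    refine h2.congr fun n => ?_
    push_cast
    ring_nf
    rfl
  have hb : Summable b := by
    have hak : ‖α‖ / (k:ℝ) < 1 := (div_lt_one hk0).mpr hα
    refine summable_of_ratio_test_tendsto_lt_one hak ?_ ?_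
    · refine Filter.Eventually.of_forall fun j => ?_
      have h1 : binCoeff (-s) j ≠ 0 := binCoeff_ne_zero hw j
      have h2 : ‖α‖ / (k:ℝ) ≠ 0 :=
        div_ne_zero (norm_ne_zero_iff.mpr hα0) hk0.ne'
      exact mul_ne_zero (norm_ne_zero_iff.mpr h1) (pow_ne_zero _ h2)
    · have heq : ∀ j : ℕ, ‖b (j+1)‖ / ‖b j‖ =
          (‖binCoeff (-s) (j+1)‖ / ‖binCoeff (-s) j‖) * (‖α‖ / k) := by
        intro j
        have hp : (‖α‖ / (k:ℝ)) ^ j ≠ 0 :=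
          pow_ne_zero _ (div_ne_zero (norm_ne_zero_iff.mpr hα0) hk0.ne')
        rw [Real.norm_of_nonneg (hbnonneg _), Real.norm_of_nonneg (hbnonneg _), hb_def,
          mul_div_mul_comm, pow_succ, mul_div_cancel_left₀ _ hp]
      simp_rw [heq]
      have := (binCoeff_ratio hw).mul_const (‖α‖ / (k:ℝ))
      simpa using this
  have hF2sum : Summable F2 := by
    refine Summable.of_norm_bounded (ha.mul_of_nonneg hb hanonneg hbnonneg) ?_
    rintro ⟨n, j⟩
    have hnorm : ‖F2 (n, j)‖ =
        ((n:ℝ) + k) ^ (-s.re) * (‖binCoeff (-s) j‖ * (‖α‖ / ((n:ℝ) + k)) ^ j) := by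
      rw [hF2]
      rw [norm_mul, norm_mul, norm_pow, hcast n]
      rw [Complex.norm_cpow_eq_rpow_re_of_pos (hmpos n)]
      have hre : (-(s + (j:ℂ))).re = -s.re + -(j:ℝ) := by
        simp [Complex.add_re]
        ring
      have hms : ((n:ℝ) + k) ^ (-(j:ℝ)) = (((n:ℝ) + k) ^ j)⁻¹ := by
        rw [Real.rpow_neg (hmpos n).le, Real.rpow_natCast]
      rw [hre, Real.rpow_add (hmpos n), hms, div_pow]
      have hmj : ((n:ℝ) + k) ^ j ≠ 0 := pow_ne_zero _ (hmpos n).ne'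
      field_simp [hmj]
    have hdiv : ‖α‖ / ((n:ℝ) + k) ≤ ‖α‖ / k := by
      gcongr
      linarith [Nat.cast_nonneg (α := ℝ) n]
    rw [hnorm]
    show _ ≤ a n * b j
    rw [ha_def, hb_def]
    exact mul_le_mul_of_nonneg_left
      (mul_le_mul_of_nonneg_left (pow_le_pow_left₀ (by positivity) hdiv j) (norm_nonneg _))
      (Real.rpow_nonneg (hmpos n).le _)
  -- Step 3: assemble
  have h1 : ∀ n, Summable fun j => F2 (n, j) := fun n => (step1 n).summable
  have h2 : ∀ j, Summable fun n => F2 (n, j) := fun j => hF2sum.prod_symm.prod_factor j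
  have huncurry : Summable (Function.uncurry fun n j => F2 (n, j)) := by
    refine hF2sum.congr fun p => ?_
    rfl
  have hLHS : ∑' n : ℕ, ((n : ℂ) + k + α) ^ (-s) = ∑' (n : ℕ) (j : ℕ), F2 (n, j) :=
    tsum_congr fun n => (step1 n).tsum_eq.symm
  have hswap : ∑' (n : ℕ) (j : ℕ), F2 (n, j) = ∑' (j : ℕ) (n : ℕ), F2 (n, j) :=
    (Summable.tsum_comm' huncurry h1 h2).symm
  have hinner : ∀ j : ℕ, ∑' n : ℕ, F2 (n, j)
      = binCoeff (-s) j * α ^ j * zetaShift k (s + j) := by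
    intro j
    simp only [hF2, zetaShift]
    rw [← tsum_mul_left]
  set g : ℕ → ℂ := fun j => binCoeff (-s) j * α ^ j * zetaShift k (s + j) with hg_def
  have hgsum : Summable g := by
    have : g = fun j => ∑' n : ℕ, F2 (n, j) := funext fun j => (hinner j).symm
    rw [this]
    exact hF2sum.prod_symm.prod
  have hsplit3 : ∑' j : ℕ, g j = g 0 + ∑' j : ℕ, g (j + 1) := Summable.tsum_eq_zero_add hgsum
  have hg0 : g 0 = zetaShift k s := by
    simp [hg_def, binCoeff_zero]
  have htail : ∑' j : ℕ, g (j + 1) =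
      ∑' n : ℕ, ((-1) ^ (n + 1) / ((n + 1).factorial : ℂ)) *
        (∏ i ∈ Finset.range (n + 1), (s + i)) * zetaShift k (s + (n + 1)) * α ^ (n + 1) := by
    refine tsum_congr fun j => ?_
    rw [hg_def]
    simp only
    rw [binCoeff_neg]
    push_cast
    ring
  rw [hLHS, hswap]
  rw [show ∑' (j : ℕ) (n : ℕ), F2 (n, j) = ∑' j : ℕ, g j from tsum_congr hinner]
  rw [hsplit3, hg0, htail]
end

section
/- For fixed integer k ≥ 1, fixed complex s with Re(s) > 1, and any β with 0 ≤ β < k, the power series ∑_{n≥0} b_{n,k}(s) α^n, where b_{n,k}(s) = ((-1)^n/n!) s(s+1)⋯(s+n-1) ζ_k(s+n) (with b_{0,k}(s) = ζ_k(s)), converges absolutely and satisfies the bound |∑_{n≥0} b_{n,k}(s) α^n| ≤ ζ(Re s) · (1 − β/k)^{-|s|} for all |α| ≤ β. -/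
open Complex Finset

/-- Partial sums of the binomial series `∑ (a)_n/n! xⁿ` are bounded by `(1-x)^(-a)`. -/
private lemma binom_partial_le' (a x : ℝ) (ha : 0 ≤ a) (hx0 : 0 ≤ x) (hx1 : x < 1) (N : ℕ) :
    ∑ n ∈ Finset.range N, (∏ i ∈ Finset.range n, (a + i)) / n.factorial * x ^ n
      ≤ (1 - x) ^ (-a) := by
  set c : ℕ → ℝ := fun n => (∏ i ∈ Finset.range n, (a + i)) / n.factorial with hc
  have hc0 : c 0 = 1 := by simp [hc]
  have hcnn : ∀ n, 0 ≤ c n := by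
    intro n
    apply div_nonneg _ (by positivity)
    exact Finset.prod_nonneg fun i _ => by positivity
  have hrec : ∀ n : ℕ, ((n : ℝ) + 1) * c (n + 1) = (a + n) * c n := by
    intro n
    have hf : ((n.factorial : ℝ)) ≠ 0 := Nat.cast_ne_zero.mpr n.factorial_ne_zero
    simp only [hc, Finset.prod_range_succ, Nat.factorial_succ]
    push_cast
    field_simp
  set g : ℝ → ℝ := fun t => ∑ n ∈ Finset.range N, c n * t ^ n with hgdef
  set g' : ℝ → ℝ := fun t => ∑ n ∈ Finset.range N, c n * (n * t ^ (n - 1)) with hg'def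
  have hg : ∀ t : ℝ, HasDerivAt g (g' t) t := by
    intro t
    exact HasDerivAt.fun_sum fun n _ => (hasDerivAt_pow n t).const_mul (c n)
  have halg : ∀ t : ℝ, 0 ≤ t → (1 - t) * g' t ≤ a * g t := by
    intro t ht
    have hshift : g' t = ∑ n ∈ Finset.range (N - 1), (a + n) * c n * t ^ n := by
      cases N with
      | zero => simp [hg'def]
      | succ M =>
        simp only [hg'def, Nat.add_sub_cancel]
        rw [Finset.sum_range_succ']
        simp only [Nat.cast_zero, zero_mul, mul_zero, add_zero]
        refine Finset.sum_congr rfl fun i _ => ?_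
        have := hrec i
        have h2 : c (i + 1) * ((i : ℝ) + 1) = (a + i) * c i := by linarith [hrec i]
        calc c (i + 1) * (((i : ℕ) + 1 : ℕ) * t ^ (i + 1 - 1))
            = (c (i + 1) * ((i : ℝ) + 1)) * t ^ i := by push_cast; ring
          _ = (a + i) * c i * t ^ i := by rw [h2]
    have htg : t * g' t = ∑ n ∈ Finset.range N, (n : ℝ) * (c n * t ^ n) := by
      rw [hg'def, Finset.mul_sum]
      refine Finset.sum_congr rfl fun n _ => ?_
      cases n with
      | zero => simp
      | succ m => simp only [Nat.add_sub_cancel]; push_cast; ring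
    have hag : a * g t = ∑ n ∈ Finset.range N, a * (c n * t ^ n) := by
      rw [hgdef, Finset.mul_sum]
    have hkey : ∑ n ∈ Finset.range (N - 1), (a + n) * c n * t ^ n
        ≤ ∑ n ∈ Finset.range N, (a + n) * c n * t ^ n := by
      apply Finset.sum_le_sum_of_subset_of_nonneg
        (Finset.range_subset_range.mpr (Nat.sub_le N 1))
      intro i _ _
      have : (0:ℝ) ≤ a + i := by positivity
      positivity
    have : (1 - t) * g' t = g' t - t * g' t := by ring
    rw [this, htg, hshift, hag]
    have hexp : ∑ n ∈ Finset.range N, (a + n) * c n * t ^ n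
        = ∑ n ∈ Finset.range N, a * (c n * t ^ n)
          + ∑ n ∈ Finset.range N, (n : ℝ) * (c n * t ^ n) := by
      rw [← Finset.sum_add_distrib]
      exact Finset.sum_congr rfl fun n _ => by ring
    linarith [hkey, hexp.symm.le]
  set h : ℝ → ℝ := fun t => g t * (1 - t) ^ a with hhdef
  have hder : ∀ t : ℝ, t < 1 →
      HasDerivAt h (g' t * (1 - t) ^ a + g t * (-1 * a * (1 - t) ^ (a - 1))) t := by
    intro t ht
    have h1t : (0:ℝ) < 1 - t := by linarith
    have hlin : HasDerivAt (fun t : ℝ => 1 - t) (-1) t := (hasDerivAt_id t).const_sub 1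
    have hq := hlin.rpow_const (p := a) (Or.inl (ne_of_gt h1t))
    exact (hg t).mul hq
  have hmono : AntitoneOn h (Set.Icc 0 x) := by
    apply antitoneOn_of_deriv_nonpos (convex_Icc 0 x)
    · intro t htmem
      have ht1 : t < 1 := lt_of_le_of_lt htmem.2 hx1
      exact (hder t ht1).continuousAt.continuousWithinAt
    · intro t htmem
      rw [interior_Icc] at htmem
      exact (hder t (htmem.2.trans hx1)).differentiableAt.differentiableWithinAt
    · intro t htmem
      rw [interior_Icc] at htmem
      have ht0 : 0 < t := htmem.1
      have ht1 : t < 1 := htmem.2.trans hx1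
      have h1t : (0:ℝ) < 1 - t := by linarith
      rw [(hder t ht1).deriv]
      have hsplit : (1 - t) ^ a = (1 - t) ^ (a - 1) * (1 - t) := by
        have h2 := Real.rpow_add h1t (a - 1) 1
        have h3 : a - 1 + 1 = a := by ring
        rw [h3, Real.rpow_one] at h2
        exact h2
      have : g' t * (1 - t) ^ a + g t * (-1 * a * (1 - t) ^ (a - 1))
          = (1 - t) ^ (a - 1) * ((1 - t) * g' t - a * g t) := by
        rw [hsplit]; ring
      rw [this]
      apply mul_nonpos_iff.mpr
      left
      exact ⟨Real.rpow_nonneg h1t.le _, by linarith [halg t ht0.le]⟩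
  have hx_mem : x ∈ Set.Icc (0:ℝ) x := Set.mem_Icc.mpr ⟨hx0, le_refl x⟩
  have h0_mem : (0:ℝ) ∈ Set.Icc (0:ℝ) x := Set.mem_Icc.mpr ⟨le_refl 0, hx0⟩
  have hhx := hmono h0_mem hx_mem hx0
  have hh0 : h 0 ≤ 1 := by
    simp only [hhdef, hgdef, sub_zero, Real.one_rpow, mul_one]
    cases N with
    | zero => simp
    | succ M =>
      rw [Finset.sum_eq_single 0]
      · simp [hc0]
      · intro b _ hb; simp [zero_pow hb]
      · intro hn; exact absurd (Finset.mem_range.mpr (Nat.succ_pos M)) hn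
  have hgx : g x * (1 - x) ^ a ≤ 1 := le_trans hhx hh0
  have h1x : (0:ℝ) < 1 - x := by linarith
  have hpos : (0:ℝ) < (1 - x) ^ a := Real.rpow_pos_of_pos h1x a
  have : g x ≤ 1 / (1 - x) ^ a := (le_div_iff₀ hpos).mpr hgx
  calc (∑ n ∈ Finset.range N, (∏ i ∈ Finset.range n, (a + i)) / n.factorial * x ^ n)
      = g x := rfl
    _ ≤ 1 / (1 - x) ^ a := this
    _ = (1 - x) ^ (-a) := by rw [Real.rpow_neg h1x.le, one_div]

/-- The coefficients `b_{n,k}(s) = ((-1)^n/n!) s(s+1)⋯(s+n-1) ζ_k(s+n)`. -/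
noncomputable def bCoeff (k : ℕ) (s : ℂ) (n : ℕ) : ℂ :=
  ((-1) ^ n / (n.factorial : ℂ)) * (∏ i ∈ Finset.range n, (s + i)) * zetaShift k (s + n)

private lemma Zsum' (s : ℂ) (hs : 1 < s.re) : Summable (fun m : ℕ => ((m:ℝ) + 1) ^ (-s.re)) := by
  have h := (Real.summable_one_div_nat_rpow (p := s.re)).mpr hs
  have h2 := (summable_nat_add_iff 1).mpr h
  refine h2.congr fun m => ?_
  rw [Real.rpow_neg (by positivity), one_div]
  push_cast
  ring_nf

private lemma zetaShift_norm_le' (k : ℕ) (hk : 1 ≤ k) (s : ℂ) (hs : 1 < s.re) (n : ℕ) :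
    ‖zetaShift k (s + n)‖ ≤ ((k:ℝ)⁻¹) ^ n * ∑' m : ℕ, ((m:ℝ) + 1) ^ (-s.re) := by
  have hkpos : (0:ℝ) < k := by exact_mod_cast hk
  have hterm : ∀ m : ℕ, ‖((m : ℂ) + k) ^ (-(s + n))‖
      ≤ ((k:ℝ)⁻¹) ^ n * (((m:ℝ) + 1) ^ (-s.re)) := by
    intro m
    have hmk : (0:ℝ) < (m:ℝ) + k := by positivity
    have hcast : ((m : ℂ) + k) = (((m:ℝ) + k : ℝ) : ℂ) := by push_cast; ring
    rw [hcast, Complex.norm_cpow_eq_rpow_re_of_pos hmk]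
    have hre : (-(s + (n:ℂ))).re = -s.re + -(n:ℝ) := by simp; ring
    rw [hre, Real.rpow_add hmk]
    have h1 : ((m:ℝ) + k) ^ (-(n:ℝ)) ≤ ((k:ℝ)⁻¹) ^ n := by
      rw [Real.rpow_neg hmk.le, Real.rpow_natCast, ← inv_pow]
      apply pow_le_pow_left₀ (by positivity)
      rw [inv_le_inv₀ hmk hkpos]
      linarith [Nat.cast_nonneg (α := ℝ) m]
    have h2 : ((m:ℝ) + k) ^ (-s.re) ≤ ((m:ℝ) + 1) ^ (-s.re) := by
      have hm1 : (0:ℝ) < (m:ℝ) + 1 := by positivity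
      rw [Real.rpow_neg hmk.le, Real.rpow_neg hm1.le]
      apply inv_anti₀ (Real.rpow_pos_of_pos hm1 _)
      apply Real.rpow_le_rpow hm1.le (by linarith [hkpos, (by exact_mod_cast hk : (1:ℝ) ≤ k)]) (by linarith)
    calc ((m:ℝ) + k) ^ (-s.re) * ((m:ℝ) + k) ^ (-(n:ℝ))
        ≤ ((m:ℝ) + 1) ^ (-s.re) * ((k:ℝ)⁻¹) ^ n := by
          apply mul_le_mul h2 h1 (Real.rpow_nonneg hmk.le _) (Real.rpow_nonneg (by positivity) _)
      _ = ((k:ℝ)⁻¹) ^ n * (((m:ℝ) + 1) ^ (-s.re)) := by ring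
  have hB : Summable (fun m : ℕ => ((k:ℝ)⁻¹) ^ n * (((m:ℝ) + 1) ^ (-s.re))) :=
    (Zsum' s hs).mul_left _
  have hnorm : Summable (fun m : ℕ => ‖((m : ℂ) + k) ^ (-(s + n))‖) :=
    Summable.of_nonneg_of_le (fun m => norm_nonneg _) hterm hB
  calc ‖zetaShift k (s + n)‖ ≤ ∑' m : ℕ, ‖((m : ℂ) + k) ^ (-(s + n))‖ :=
        norm_tsum_le_tsum_norm hnorm
    _ ≤ ∑' m : ℕ, ((k:ℝ)⁻¹) ^ n * (((m:ℝ) + 1) ^ (-s.re)) := Summable.tsum_le_tsum hterm hnorm hB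
    _ = ((k:ℝ)⁻¹) ^ n * ∑' m : ℕ, ((m:ℝ) + 1) ^ (-s.re) := tsum_mul_left

/-- For fixed `k ≥ 1`, fixed `s` with `Re s > 1` and `0 ≤ β < k`, the power series
`∑ b_{n,k}(s) α^n` converges absolutely for `|α| ≤ β` and is bounded by
`ζ(Re s) (1 - β/k)^{-|s|}`. -/
theorem bCoeff_series_bound (k : ℕ) (hk : 1 ≤ k) (s : ℂ) (hs : 1 < s.re) (β : ℝ)
    (hβ0 : 0 ≤ β) (hβ : β < k) (α : ℂ) (hα : ‖α‖ ≤ β) :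
    Summable (fun n : ℕ => ‖bCoeff k s n * α ^ n‖) ∧
      ‖∑' n : ℕ, bCoeff k s n * α ^ n‖ ≤
        (∑' n : ℕ, ((n : ℝ) + 1) ^ (-s.re)) * (1 - β / k) ^ (-‖s‖) := by
  have hkpos : (0:ℝ) < k := by exact_mod_cast hk
  set a : ℝ := ‖s‖ with hadef
  set x : ℝ := β / k with hxdef
  set Z : ℝ := ∑' n : ℕ, ((n : ℝ) + 1) ^ (-s.re) with hZdef
  have ha : 0 ≤ a := norm_nonneg s
  have hx0 : 0 ≤ x := div_nonneg hβ0 hkpos.le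
  have hx1 : x < 1 := (div_lt_one hkpos).mpr hβ
  have hZ0 : 0 ≤ Z := tsum_nonneg fun m => Real.rpow_nonneg (by positivity) _
  set c : ℕ → ℝ := fun n => (∏ i ∈ Finset.range n, (a + i)) / n.factorial with hcdef
  have hcnn : ∀ n, 0 ≤ c n * x ^ n := by
    intro n
    apply mul_nonneg (div_nonneg (Finset.prod_nonneg fun i _ => by positivity) (by positivity))
      (by positivity)
  have hsum_c : Summable (fun n => c n * x ^ n) :=
    summable_of_sum_range_le hcnn (fun N => binom_partial_le' a x ha hx0 hx1 N)
  have htsum_c : ∑' n, c n * x ^ n ≤ (1 - x) ^ (-a) :=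
    Summable.tsum_le_of_sum_range_le hsum_c (fun N => binom_partial_le' a x ha hx0 hx1 N)
  have hbound : ∀ n : ℕ, ‖bCoeff k s n * α ^ n‖ ≤ Z * (c n * x ^ n) := by
    intro n
    have hf0 : ((n.factorial : ℝ)) ≠ 0 := Nat.cast_ne_zero.mpr n.factorial_ne_zero
    have hk0 : (k:ℝ) ≠ 0 := hkpos.ne'
    have heq : ‖bCoeff k s n * α ^ n‖ = 1 / (n.factorial : ℝ)
        * ‖∏ i ∈ Finset.range n, (s + i)‖ * ‖zetaShift k (s + n)‖ * ‖α‖ ^ n := by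
      simp [bCoeff, norm_mul, norm_div, norm_pow]
    have hprod : ‖∏ i ∈ Finset.range n, (s + i)‖ ≤ ∏ i ∈ Finset.range n, (a + i) := by
      rw [norm_prod]
      apply Finset.prod_le_prod (fun i _ => norm_nonneg _)
      intro i _
      calc ‖s + (i:ℂ)‖ ≤ ‖s‖ + ‖(i:ℂ)‖ := norm_add_le _ _
        _ = a + i := by rw [Complex.norm_natCast]
    have hz := zetaShift_norm_le' k hk s hs n
    have hαn : ‖α‖ ^ n ≤ β ^ n := pow_le_pow_left₀ (norm_nonneg α) hα n
    calc ‖bCoeff k s n * α ^ n‖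
        = 1 / (n.factorial : ℝ) * ‖∏ i ∈ Finset.range n, (s + i)‖
            * ‖zetaShift k (s + n)‖ * ‖α‖ ^ n := heq
      _ ≤ 1 / (n.factorial : ℝ) * (∏ i ∈ Finset.range n, (a + i))
            * (((k:ℝ)⁻¹) ^ n * Z) * β ^ n := by
          have h1 : (0:ℝ) ≤ ∏ i ∈ Finset.range n, (a + i) :=
            Finset.prod_nonneg fun i _ => by positivity
          gcongr
      _ = Z * (c n * x ^ n) := by
          simp only [hcdef, hxdef, div_pow]
          field_simp
          have hkn : (k:ℝ)^n * ((k:ℝ)⁻¹)^n = 1 := by rw [← mul_pow, mul_inv_cancel₀ hk0, one_pow]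
          linear_combination ((∏ i ∈ Finset.range n, (a + i)) * Z * β^n) * hkn
  have hsum_b : Summable (fun n : ℕ => ‖bCoeff k s n * α ^ n‖) :=
    Summable.of_nonneg_of_le (fun n => norm_nonneg _) hbound (hsum_c.mul_left Z)
  refine ⟨hsum_b, ?_⟩
  calc ‖∑' n : ℕ, bCoeff k s n * α ^ n‖ ≤ ∑' n : ℕ, ‖bCoeff k s n * α ^ n‖ :=
        norm_tsum_le_tsum_norm hsum_b
    _ ≤ ∑' n : ℕ, Z * (c n * x ^ n) := Summable.tsum_le_tsum hbound hsum_b (hsum_c.mul_left Z)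
    _ = Z * ∑' n : ℕ, c n * x ^ n := tsum_mul_left
    _ ≤ Z * (1 - x) ^ (-a) := mul_le_mul_of_nonneg_left htsum_c hZ0
end

section
/- For every complex s with Re(s) > 1, (1 − 2^{1-s}) ζ(s) = ∑_{n≥1} [s(s+1)⋯(s+n-1)/(2^{s+n} n!)] · ζ(s+n). -/
open Complex Finset Filter Topology

private noncomputable def cc (s : ℂ) (n : ℕ) : ℂ :=
  (∏ i ∈ Finset.range n, (s + i)) / n.factorial

private lemma cc_zero (s : ℂ) : cc s 0 = 1 := by simp [cc]

private lemma cc_succ (s : ℂ) (n : ℕ) :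
    cc s (n + 1) = cc s n * ((s + n) / (n + 1)) := by
  have h1 : ((n.factorial : ℂ)) ≠ 0 := Nat.cast_ne_zero.2 n.factorial_ne_zero
  have h2 : ((n : ℂ) + 1) ≠ 0 := Nat.cast_add_one_ne_zero n
  simp only [cc, Finset.prod_range_succ, Nat.factorial_succ]
  rw [div_mul_div_comm]
  push_cast
  rw [mul_comm ((n:ℂ)+1)]

private lemma cc_succ' (s : ℂ) (n : ℕ) :
    cc s (n + 1) * ((n : ℂ) + 1) = cc s n * (s + n) := by
  have h2 : ((n : ℂ) + 1) ≠ 0 := Nat.cast_add_one_ne_zero n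
  rw [cc_succ]
  field_simp

private lemma cc_ne_zero {s : ℂ} (hs : 1 < s.re) (n : ℕ) : cc s n ≠ 0 := by
  have h1 : ((n.factorial : ℂ)) ≠ 0 := Nat.cast_ne_zero.2 n.factorial_ne_zero
  refine div_ne_zero (Finset.prod_ne_zero_iff.2 fun i _ => ?_) h1
  refine Complex.ne_zero_of_one_lt_re ?_
  simp only [Complex.add_re, Complex.natCast_re]
  have : (0:ℝ) ≤ i := Nat.cast_nonneg i
  linarith

private lemma summable_core {s : ℂ} (hs : 1 < s.re) {r : ℝ} (h0 : 0 ≤ r) (h1 : r < 1) :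
    Summable (fun n : ℕ => ‖cc s n‖ * (n + 1) * r ^ n) := by
  rcases eq_or_lt_of_le h0 with h0' | h0'
  · apply summable_of_ne_finset_zero (s := {0})
    intro n hn
    simp only [Finset.mem_singleton] at hn
    simp [← h0', zero_pow hn]
  · have hinv : Tendsto (fun n : ℕ => ((n : ℂ) + 1)⁻¹) atTop (𝓝 0) := by
      rw [tendsto_zero_iff_norm_tendsto_zero]
      have he : ∀ n : ℕ, ‖((n:ℂ)+1)⁻¹‖ = 1/((n:ℝ)+1) := by
        intro n
        rw [norm_inv, one_div]
        norm_cast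
      simpa only [he] using tendsto_one_div_add_atTop_nhds_zero_nat
    have hinvR : Tendsto (fun n : ℕ => ((n : ℝ) + 1)⁻¹) atTop (𝓝 0) := by
      simpa only [one_div] using tendsto_one_div_add_atTop_nhds_zero_nat (𝕜 := ℝ)
    have hB : Tendsto (fun n : ℕ => ‖(s + n) / ((n:ℂ) + 1)‖) atTop (𝓝 1) := by
      have : Tendsto (fun n : ℕ => (s + n) / ((n:ℂ) + 1)) atTop (𝓝 1) := by
        have h2 : Tendsto (fun n : ℕ => 1 + (s - 1) * ((n:ℂ)+1)⁻¹) atTop (𝓝 (1 + (s-1) * 0)) :=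
          tendsto_const_nhds.add (tendsto_const_nhds.mul hinv)
        rw [mul_zero, add_zero] at h2
        refine h2.congr fun n => ?_
        have h3 : ((n:ℂ)+1) ≠ 0 := Nat.cast_add_one_ne_zero n
        field_simp
        ring
      simpa using this.norm
    have hC : Tendsto (fun n : ℕ => ((n:ℝ) + 2) / ((n:ℝ) + 1)) atTop (𝓝 1) := by
      have h2 : Tendsto (fun n : ℕ => 1 + ((n:ℝ)+1)⁻¹) atTop (𝓝 (1 + 0)) :=
        tendsto_const_nhds.add hinvR
      rw [add_zero] at h2
      refine h2.congr fun n => ?_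
      have h3 : ((n:ℝ)+1) ≠ 0 := by positivity
      field_simp
      ring
    apply summable_of_ratio_test_tendsto_lt_one h1
    · filter_upwards with n
      exact (mul_pos (mul_pos (norm_pos_iff.2 (cc_ne_zero hs n)) (by positivity))
        (pow_pos h0' n)).ne'
    · have hT : Tendsto (fun n : ℕ =>
          ‖(s + n) / ((n:ℂ) + 1)‖ * (((n:ℝ) + 2) / ((n:ℝ) + 1)) * r) atTop (𝓝 (1 * 1 * r)) :=
        (hB.mul hC).mul_const r
      rw [one_mul, one_mul] at hT
      refine hT.congr fun n => ?_
      have hccpos : 0 < ‖cc s n‖ := norm_pos_iff.2 (cc_ne_zero hs n)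
      have hn1 : (0:ℝ) < (n:ℝ) + 1 := by positivity
      have hrn : (0:ℝ) < r ^ n := pow_pos h0' n
      rw [Real.norm_of_nonneg (by positivity), Real.norm_of_nonneg (by positivity)]
      rw [cc_succ, norm_mul, norm_div]
      have hnn : ‖((n:ℂ)+1)‖ = (n:ℝ)+1 := by
        norm_cast
      rw [hnn, pow_succ]
      have hd : ‖cc s n‖ * ((n:ℝ) + 1) * r ^ n ≠ 0 := by positivity
      rw [eq_div_iff hd]
      field_simp
      push_cast
      ring


private lemma summable_pow {s : ℂ} (hs : 1 < s.re) {y : ℝ} (hy : |y| ≤ 3/4) :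
    Summable (fun n : ℕ => cc s n * (y:ℂ) ^ n) := by
  refine Summable.of_norm_bounded
    (summable_core hs (by norm_num) (by norm_num : (3/4:ℝ) < 1)) fun n => ?_
  rw [norm_mul, norm_pow, Complex.norm_real, Real.norm_eq_abs]
  have h1 : ‖cc s n‖ * |y| ^ n ≤ ‖cc s n‖ * (3/4:ℝ) ^ n :=
    mul_le_mul_of_nonneg_left (pow_le_pow_left₀ (abs_nonneg y) hy n) (norm_nonneg _)
  have h2 : ‖cc s n‖ * (3/4:ℝ) ^ n ≤ ‖cc s n‖ * ((n:ℝ)+1) * (3/4) ^ n := by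
    have h3 : (1:ℝ) ≤ (n:ℝ)+1 := by
      have : (0:ℝ) ≤ (n:ℝ) := Nat.cast_nonneg n
      linarith
    calc ‖cc s n‖ * (3/4:ℝ) ^ n = ‖cc s n‖ * 1 * (3/4:ℝ) ^ n := by ring
      _ ≤ ‖cc s n‖ * ((n:ℝ)+1) * (3/4) ^ n := by gcongr
  linarith

private lemma summable_u {s : ℂ} (hs : 1 < s.re) :
    Summable (fun n : ℕ => ‖cc s n‖ * ((n:ℝ) * (3/4:ℝ) ^ (n-1))) := by
  refine Summable.of_nonneg_of_le (fun n => by positivity) (fun n => ?_)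
    (((summable_core hs (by norm_num) (by norm_num : (3/4:ℝ) < 1)).mul_left (4/3)))
  cases n with
  | zero => simp
  | succ m =>
    have : ((m+1:ℕ):ℝ) * (3/4)^((m+1)-1) = (m+1) * (3/4)^m := by push_cast; ring
    rw [this]
    have h2 : (4:ℝ)/3 * (‖cc s (m+1)‖ * ((m+1:ℕ)+1) * (3/4)^(m+1))
        = ‖cc s (m+1)‖ * (((m:ℝ)+2) * (3/4)^m) := by push_cast; ring
    rw [h2]
    gcongr
    push_cast
    linarith

private lemma binomial {s : ℂ} (hs : 1 < s.re) {x : ℝ} (hx0 : 0 ≤ x) (hx : x ≤ 1/2) :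
    HasSum (fun n : ℕ => cc s n * (x:ℂ) ^ n) (((1 - x : ℝ) : ℂ) ^ (-s)) := by
  set t : Set ℝ := Metric.ball (0:ℝ) (3/4) with ht
  have htopen : IsOpen t := Metric.isOpen_ball
  have htconn : IsPreconnected t := (convex_ball (0:ℝ) _).isPreconnected
  have hmem : ∀ y : ℝ, |y| < 3/4 → y ∈ t := fun y hy => by
    simpa [ht, Metric.mem_ball, Real.dist_eq] using hy
  have habs : ∀ y : ℝ, y ∈ t → |y| < 3/4 := fun y hy => by
    simpa [ht, Metric.mem_ball, Real.dist_eq] using hy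
  have hderiv : ∀ (n : ℕ) (y : ℝ), HasDerivAt (fun z : ℝ => cc s n * (z:ℂ)^n)
      (cc s n * (n * (y:ℂ)^(n-1))) y := fun n y =>
    HasDerivAt.comp_ofReal ((hasDerivAt_pow n ((y:ℝ):ℂ)).const_mul (cc s n))
  have hbound : ∀ (n : ℕ) (y : ℝ), y ∈ t →
      ‖cc s n * (n * (y:ℂ)^(n-1))‖ ≤ ‖cc s n‖ * ((n:ℝ) * (3/4:ℝ) ^ (n-1)) := by
    intro n y hy
    rw [norm_mul, norm_mul, norm_pow, Complex.norm_real, Real.norm_eq_abs,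
      Complex.norm_natCast]
    gcongr
    exact (habs y hy).le
  set F : ℝ → ℂ := fun z => ∑' n, cc s n * (z:ℂ)^n with hF
  have hFderiv : ∀ y ∈ t, HasDerivAt F (∑' n, cc s n * (n * (y:ℂ)^(n-1))) y := by
    intro y hy
    exact hasDerivAt_tsum_of_isPreconnected (summable_u hs) htopen htconn
      (fun n z _ => hderiv n z) (fun n z hz => hbound n z hz)
      (hmem 0 (by norm_num)) (summable_pow hs (by norm_num)) hy
  have key : ∀ y : ℝ, y ∈ t →
      (1 - (y:ℂ)) * (∑' n, cc s n * (n * (y:ℂ)^(n-1))) = s * ∑' n, cc s n * (y:ℂ)^n := by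
    intro y hy
    have hsa : Summable (fun n : ℕ => cc s n * (y:ℂ)^n) := summable_pow hs (habs y hy).le
    have hsb : Summable (fun n : ℕ => cc s n * (n * (y:ℂ)^(n-1))) :=
      Summable.of_norm_bounded (summable_u hs) (fun n => hbound n y hy)
    have hterm : ∀ n : ℕ, cc s (n+1) * (((n+1:ℕ):ℂ) * (y:ℂ)^((n+1)-1))
        = s * (cc s n * (y:ℂ)^n) + (y:ℂ) * (cc s n * ((n:ℕ) * (y:ℂ)^(n-1))) := by
      intro n
      have h1 : cc s (n+1) * (((n+1:ℕ):ℂ) * (y:ℂ)^((n+1)-1))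
          = (cc s n * (s + n)) * (y:ℂ)^n := by
        rw [← cc_succ' s n]
        push_cast
        ring
      rw [h1]
      cases n with
      | zero => simp; ring
      | succ m =>
        have h2 : (y:ℂ) ^ (m+1) = (y:ℂ) * (y:ℂ)^((m+1)-1) := by
          rw [Nat.add_sub_cancel, pow_succ]; ring
        rw [h2]
        push_cast
        ring
    have h1 : ∑' n, cc s n * (n * (y:ℂ)^(n-1))
        = s * (∑' n, cc s n * (y:ℂ)^n) + (y:ℂ) * ∑' n, cc s n * (n * (y:ℂ)^(n-1)) := by
      conv_lhs => rw [hsb.tsum_eq_zero_add]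
      have h0 : cc s 0 * (((0:ℕ):ℂ) * (y:ℂ)^(0-1)) = 0 := by simp
      rw [h0, zero_add]
      calc ∑' n, cc s (n+1) * (((n+1:ℕ):ℂ) * (y:ℂ)^((n+1)-1))
          = ∑' n, (s * (cc s n * (y:ℂ)^n) + (y:ℂ) * (cc s n * ((n:ℕ) * (y:ℂ)^(n-1)))) :=
            tsum_congr hterm
        _ = s * (∑' n, cc s n * (y:ℂ)^n) + (y:ℂ) * ∑' n, cc s n * (n * (y:ℂ)^(n-1)) := by
            rw [Summable.tsum_add (hsa.mul_left s) (hsb.mul_left (y:ℂ)), tsum_mul_left, tsum_mul_left]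
    linear_combination h1
  -- derivative of the auxiliary function is zero
  set g : ℝ → ℂ := fun z => (1 - (z:ℂ))^s * F z with hg
  have hgderiv : ∀ y ∈ t, HasDerivAt g 0 y := by
    intro y hy
    have hyre : (1/4:ℝ) < 1 - y := by have := (abs_lt.1 (habs y hy)).2; linarith
    have hslit : (1 - (y:ℂ)) ∈ Complex.slitPlane := by
      refine Complex.mem_slitPlane_iff.2 (Or.inl ?_)
      simp only [Complex.sub_re, Complex.one_re, Complex.ofReal_re]
      linarith
    have hne : (1 - (y:ℂ)) ≠ 0 := Complex.slitPlane_ne_zero hslit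
    have hcpow : HasDerivAt (fun z : ℝ => (1 - (z:ℂ))^s) (s * (1 - (y:ℂ))^(s-1) * (-1)) y := by
      have h1 : HasDerivAt (fun z : ℂ => 1 - z) (-1) (y:ℂ) := by
        simpa using (hasDerivAt_id ((y:ℝ):ℂ)).const_sub 1
      exact (h1.cpow_const hslit).comp_ofReal
    have := (hcpow.mul (hFderiv y hy))
    refine this.congr_deriv ?_
    have hsplit : (1 - (y:ℂ))^s = (1 - (y:ℂ))^(s-1) * (1 - (y:ℂ)) := by
      conv_lhs => rw [show s = (s-1) + 1 by ring, cpow_add _ _ hne, cpow_one]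
    rw [hsplit]
    linear_combination ((1 - (y:ℂ))^(s-1)) * key y hy
  -- g is constant on [0, x]
  have hsub : Set.Icc (0:ℝ) x ⊆ t := by
    intro y hy
    refine hmem y ?_
    rw [_root_.abs_of_nonneg hy.1]
    calc y ≤ x := hy.2
      _ ≤ 1/2 := hx
      _ < 3/4 := by norm_num
  have hconst : g x = g 0 := by
    refine constant_of_has_deriv_right_zero (f := g) (a := 0) (b := x)
      (fun y hy => ((hgderiv y (hsub hy)).continuousAt).continuousWithinAt)
      (fun y hy => ((hgderiv y (hsub (Set.Ico_subset_Icc_self hy))).hasDerivWithinAt))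
      x (Set.right_mem_Icc.2 hx0)
  have hF0 : F 0 = 1 := by
    have hsum0 : Summable (fun n : ℕ => cc s n * ((0:ℝ):ℂ)^n) := summable_pow hs (by norm_num)
    rw [hF]
    simp only
    rw [hsum0.tsum_eq_zero_add]
    simp [cc_zero]
  have hg0 : g 0 = 1 := by
    rw [hg]; simp only [Complex.ofReal_zero, sub_zero, one_cpow, one_mul]; exact hF0
  -- conclude
  have hxt : ((x:ℝ):ℂ) = (x:ℂ) := rfl
  have hcast : ((1 - x : ℝ):ℂ) = 1 - (x:ℂ) := by push_cast; ring
  have hne : (1 - (x:ℂ)) ≠ 0 := by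
    rw [← hcast]
    simp only [ne_eq, Complex.ofReal_eq_zero]
    intro h
    linarith
  have hval : (1 - (x:ℂ))^s * F x = 1 := by
    simpa [hg] using hconst.trans hg0
  have hFx : F x = ((1 - x : ℝ):ℂ) ^ (-s) := by
    rw [hcast, cpow_neg]
    exact (inv_eq_of_mul_eq_one_right hval).symm
  have hsumx : Summable (fun n : ℕ => cc s n * (x:ℂ)^n) := by
    refine summable_pow hs ?_
    rw [_root_.abs_of_nonneg hx0]; linarith
  rw [← hFx]
  exact hsumx.hasSum


private lemma perk {s : ℂ} (hs : 1 < s.re) (k : ℕ) :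
    HasSum (fun n : ℕ => cc s (n+1) * ((2*(k+1) : ℕ) : ℂ) ^ (-(s + (n+1))))
      (((2*k+1 : ℕ) : ℂ) ^ (-s) - ((2*(k+1) : ℕ) : ℂ) ^ (-s)) := by
  set m : ℝ := ((2*(k+1) : ℕ) : ℝ) with hm
  have hm2 : (2:ℝ) ≤ m := by rw [hm]; push_cast; linarith [Nat.cast_nonneg (α := ℝ) k]
  have hm0 : (0:ℝ) < m := by linarith
  set x : ℝ := m⁻¹ with hx
  have hx0 : 0 ≤ x := by positivity
  have hx2 : x ≤ 1/2 := by
    rw [hx, inv_le_comm₀ hm0 (by norm_num)]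
    linarith
  set N : ℂ := ((2*(k+1) : ℕ) : ℂ) with hN
  have hNm : ((m:ℝ):ℂ) = N := by rw [hm, hN]; push_cast; ring
  have hN0 : N ≠ 0 := by
    rw [hN]
    exact Nat.cast_ne_zero.2 (by positivity)
  have hxN : ((x:ℝ):ℂ) = N⁻¹ := by rw [hx, Complex.ofReal_inv, hNm]
  have h2 : HasSum (fun n : ℕ => cc s (n+1) * ((x:ℝ):ℂ)^(n+1))
      ((((1 - x : ℝ):ℂ)) ^ (-s) - 1) := by
    have := (hasSum_nat_add_iff' (f := fun n : ℕ => cc s n * ((x:ℝ):ℂ)^n) 1).2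
      (binomial hs hx0 hx2)
    simpa [cc_zero] using this
  have h3 := h2.mul_right (N ^ (-s))
  have hterm : ∀ n : ℕ, cc s (n+1) * ((x:ℝ):ℂ)^(n+1) * N ^ (-s)
      = cc s (n+1) * N ^ (-(s + (n+1))) := by
    intro n
    have e1 : -(s + ((n:ℂ)+1)) = -s + -(((n+1:ℕ) : ℂ)) := by push_cast; ring
    have e2 : N ^ (-(s + ((n:ℂ)+1))) = N ^ (-s) * (N ^ (n+1))⁻¹ := by
      rw [e1, cpow_add _ _ hN0]
      congr 1
      rw [cpow_neg, cpow_natCast]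
    rw [hxN, inv_pow, e2]
    ring
  have hval : (((1 - x : ℝ):ℂ) ^ (-s) - 1) * N ^ (-s)
      = ((2*k+1 : ℕ) : ℂ) ^ (-s) - N ^ (-s) := by
    have e1 : ((1 - x : ℝ):ℂ) ^ (-s) * ((m:ℝ):ℂ) ^ (-s) = (((1-x) * m : ℝ) : ℂ) ^ (-s) := by
      rw [Complex.ofReal_mul]
      exact (mul_cpow_ofReal_nonneg (by linarith) hm0.le (-s)).symm
    have e2 : (1 - x) * m = m - 1 := by
      rw [hx]; field_simp
    have e3 : ((2*k+1 : ℕ) : ℝ) = m - 1 := by rw [hm]; push_cast; ring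
    rw [sub_mul, one_mul, ← hNm, e1, e2, ← e3]
    norm_cast
  rw [← hval]
  exact h3.congr_fun fun n => (hterm n).symm

private lemma lhs_eq {s : ℂ} (hs : 1 < s.re) :
    (1 - (2:ℂ) ^ (1 - s)) * riemannZeta s
      = ∑' k : ℕ, (((2*k+1 : ℕ) : ℂ) ^ (-s) - ((2*(k+1) : ℕ) : ℂ) ^ (-s)) := by
  set f : ℕ → ℂ := fun n => ((n+1 : ℕ) : ℂ) ^ (-s) with hf
  have hzeta : riemannZeta s = ∑' n, f n := by
    rw [zeta_eq_tsum_one_div_nat_add_one_cpow hs]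
    refine tsum_congr fun n => ?_
    simp only [hf]
    rw [cpow_neg, one_div]
    norm_num
  have hsumf : Summable f := by
    have h1 : Summable (fun n : ℕ => 1 / ((n:ℂ)) ^ s) := Complex.summable_one_div_nat_cpow.2 hs
    have h2 := (summable_nat_add_iff (f := fun n : ℕ => 1 / ((n:ℂ)) ^ s) 1).2 h1
    refine h2.congr fun n => ?_
    simp only [hf]
    rw [cpow_neg, one_div]
  have he : Summable (fun k : ℕ => f (2*k)) :=
    hsumf.comp_injective (fun a b h => by omega)
  have ho : Summable (fun k : ℕ => f (2*k+1)) :=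
    hsumf.comp_injective (fun a b h => by omega)
  have hsplit : (∑' k, f (2*k)) + ∑' k, f (2*k+1) = riemannZeta s := by
    rw [hzeta]; exact tsum_even_add_odd he ho
  have htwo : (2:ℂ) ^ (1 - s) = 2 * (2:ℂ) ^ (-s) := by
    rw [show (1:ℂ) - s = 1 + (-s) by ring, cpow_add _ _ (by norm_num : (2:ℂ) ≠ 0), cpow_one]
  have hodd : ∑' k, f (2*k+1) = (2:ℂ)^(-s) * riemannZeta s := by
    rw [hzeta, ← tsum_mul_left]
    refine tsum_congr fun k => ?_
    simp only [hf]
    have e1 : ((2*k+1+1 : ℕ) : ℂ) = ((2:ℝ):ℂ) * (((k+1:ℕ):ℝ):ℂ) := by push_cast; ring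
    rw [e1, mul_cpow_ofReal_nonneg (by norm_num : (0:ℝ) ≤ 2)
      (by positivity : (0:ℝ) ≤ ((k+1:ℕ):ℝ))]
    norm_cast
  have hrhs : ∑' k : ℕ, (((2*k+1 : ℕ) : ℂ) ^ (-s) - ((2*(k+1) : ℕ) : ℂ) ^ (-s))
      = (∑' k, f (2*k)) - ∑' k, f (2*k+1) := by
    rw [← Summable.tsum_sub he ho]
    refine tsum_congr fun k => ?_
    simp only [hf]
    congr 3
  rw [hrhs]
  linear_combination -hsplit + 2*hodd - riemannZeta s * htwo

private lemma summable_w {s : ℂ} (hs : 1 < s.re) :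
    Summable (fun n : ℕ => ‖cc s (n+1)‖ * (1/2:ℝ) ^ (n+1)) := by
  have hw : Summable (fun n : ℕ => ‖cc s n‖ * (1/2:ℝ) ^ n) := by
    refine Summable.of_nonneg_of_le (fun n => by positivity) (fun n => ?_)
      (summable_core hs (by norm_num) (by norm_num : (1/2:ℝ) < 1))
    have h3 : (1:ℝ) ≤ (n:ℝ)+1 := by
      have : (0:ℝ) ≤ (n:ℝ) := Nat.cast_nonneg n
      linarith
    calc ‖cc s n‖ * (1/2:ℝ) ^ n = ‖cc s n‖ * 1 * (1/2:ℝ) ^ n := by ring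
      _ ≤ ‖cc s n‖ * ((n:ℝ)+1) * (1/2) ^ n := by gcongr
  exact (summable_nat_add_iff 1).2 hw

private lemma summable_ab {s : ℂ} (hs : 1 < s.re) :
    Summable (Function.uncurry fun (n k : ℕ) =>
      cc s (n+1) * ((2*(k+1) : ℕ) : ℂ) ^ (-(s + (n+1)))) := by
  have hv : Summable (fun k : ℕ => ((k:ℝ)+1) ^ (-s.re)) := by
    have h1 : Summable (fun k : ℕ => ((k:ℝ)) ^ (-s.re)) :=
      Real.summable_nat_rpow.2 (by linarith)
    have h2 := (summable_nat_add_iff (f := fun k : ℕ => ((k:ℝ)) ^ (-s.re)) 1).2 h1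
    refine h2.congr fun k => ?_
    push_cast
    ring_nf
  have hprod := (summable_w hs).mul_of_nonneg hv
    (fun n => by positivity) (fun k => by positivity)
  refine Summable.of_norm_bounded hprod fun p => ?_
  obtain ⟨n, k⟩ := p
  simp only [Function.uncurry]
  rw [norm_mul]
  have hpos : 0 < 2*(k+1) := by positivity
  rw [Complex.norm_natCast_cpow_of_pos hpos]
  have hre : (-(s + ((n:ℂ)+1))).re = -(s.re + (n+1)) := by
    simp [Complex.add_re, Complex.neg_re, Complex.natCast_re]
  rw [hre]
  have hbase : ((2*(k+1) : ℕ) : ℝ) = 2 * ((k:ℝ)+1) := by push_cast; ring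
  rw [hbase]
  have hk1 : (0:ℝ) < (k:ℝ)+1 := by positivity
  have hsplit : (2 * ((k:ℝ)+1)) ^ (-(s.re + (n+1)))
      = (2:ℝ) ^ (-(s.re + (n+1))) * ((k:ℝ)+1) ^ (-(s.re + (n+1))) :=
    Real.mul_rpow (by norm_num) hk1.le
  rw [hsplit]
  have h2a : (2:ℝ) ^ (-(s.re + (n+1))) ≤ (1/2:ℝ) ^ (n+1) := by
    have e1 : -(s.re + ((n:ℝ)+1)) = -s.re + (-((n:ℝ)+1)) := by ring
    rw [e1, Real.rpow_add (by norm_num : (0:ℝ) < 2)]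
    have e2 : (2:ℝ) ^ (-((n:ℝ)+1)) = (1/2:ℝ) ^ (n+1) := by
      rw [Real.rpow_neg (by norm_num : (0:ℝ) ≤ 2)]
      rw [show ((n:ℝ)+1) = ((n+1 : ℕ) : ℝ) by push_cast; ring, Real.rpow_natCast]
      simp [one_div, inv_pow]
    rw [e2]
    have e3 : (2:ℝ) ^ (-s.re) ≤ 1 := by
      apply Real.rpow_le_one_of_one_le_of_nonpos (by norm_num)
      linarith
    nlinarith [pow_pos (by norm_num : (0:ℝ) < 1/2) (n+1), e3,
      Real.rpow_pos_of_pos (by norm_num : (0:ℝ) < 2) (-s.re)]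
  have h2b : ((k:ℝ)+1) ^ (-(s.re + (n+1))) ≤ ((k:ℝ)+1) ^ (-s.re) := by
    apply Real.rpow_le_rpow_of_exponent_le (by linarith [Nat.cast_nonneg (α := ℝ) k])
    have : (0:ℝ) ≤ (n:ℝ) := Nat.cast_nonneg n
    linarith
  calc ‖cc s (n+1)‖ * ((2:ℝ) ^ (-(s.re + (n+1))) * ((k:ℝ)+1) ^ (-(s.re + (n+1))))
      ≤ ‖cc s (n+1)‖ * ((1/2:ℝ) ^ (n+1) * ((k:ℝ)+1) ^ (-s.re)) := by
        apply mul_le_mul_of_nonneg_left _ (norm_nonneg _)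
        apply mul_le_mul h2a h2b (Real.rpow_pos_of_pos hk1 _).le (by positivity)
    _ = ‖cc s (n+1)‖ * (1/2:ℝ) ^ (n+1) * ((k:ℝ)+1) ^ (-s.re) := by ring

private lemma cc_def (s : ℂ) (n : ℕ) :
    cc s n = (∏ i ∈ Finset.range n, (s + i)) / n.factorial := rfl

/-- Ramaswami's identity: for `Re s > 1`,
`(1 − 2^{1-s}) ζ(s) = ∑_{n≥1} [s(s+1)⋯(s+n-1)/(2^{s+n} n!)] ζ(s+n)`. -/
theorem ramaswami_identity (s : ℂ) (hs : 1 < s.re) :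
    (1 - (2 : ℂ) ^ (1 - s)) * riemannZeta s =
      ∑' n : ℕ, (∏ i ∈ Finset.range (n + 1), (s + i)) /
        ((2 : ℂ) ^ (s + (n + 1)) * ((n + 1).factorial : ℂ)) * riemannZeta (s + (n + 1)) := by
  set a : ℕ → ℕ → ℂ := fun n k => cc s (n+1) * ((2*(k+1) : ℕ) : ℂ) ^ (-(s + (n+1))) with ha
  have hab := summable_ab hs
  have hterm : ∀ n : ℕ, (∏ i ∈ Finset.range (n + 1), (s + i)) /
        ((2 : ℂ) ^ (s + ((n:ℂ) + 1)) * ((n + 1).factorial : ℂ)) * riemannZeta (s + ((n:ℂ) + 1))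
      = ∑' k, a n k := by
    intro n
    have hre : 1 < (s + ((n:ℂ)+1)).re := by
      simp only [Complex.add_re, Complex.natCast_re, Complex.one_re]
      have : (0:ℝ) ≤ (n:ℝ) := Nat.cast_nonneg n
      linarith
    have hzeta : riemannZeta (s + ((n:ℂ)+1)) = ∑' k : ℕ, ((k+1:ℕ):ℂ) ^ (-(s+((n:ℂ)+1))) := by
      rw [zeta_eq_tsum_one_div_nat_add_one_cpow hre]
      refine tsum_congr fun k => ?_
      rw [cpow_neg, one_div]
      norm_num
    have hsplitk : ∀ k : ℕ, a n k
        = cc s (n+1) * ((2:ℂ)^(-(s+((n:ℂ)+1))) * ((k+1:ℕ):ℂ)^(-(s+((n:ℂ)+1)))) := by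
      intro k
      simp only [ha]
      congr 1
      have e1 : ((2*(k+1):ℕ):ℂ) = ((2:ℝ):ℂ) * (((k+1:ℕ):ℝ):ℂ) := by push_cast; ring
      rw [e1, mul_cpow_ofReal_nonneg (by norm_num : (0:ℝ) ≤ 2)
        (by positivity : (0:ℝ) ≤ ((k+1:ℕ):ℝ))]
      norm_cast
    have hsumk : ∑' k, a n k = cc s (n+1) * ((2:ℂ)^(-(s+((n:ℂ)+1))) * riemannZeta (s+((n:ℂ)+1))) := by
      rw [tsum_congr hsplitk, tsum_mul_left, tsum_mul_left, ← hzeta]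
    rw [hsumk]
    have hB : (2:ℂ) ^ (s + ((n:ℂ) + 1)) ≠ 0 := by
      intro h
      exact (by norm_num : (2:ℂ) ≠ 0) ((cpow_eq_zero_iff _ _).1 h).1
    have hC : (((n+1).factorial : ℕ) : ℂ) ≠ 0 := Nat.cast_ne_zero.2 (n+1).factorial_ne_zero
    rw [cc_def, cpow_neg]
    rw [mul_comm ((2:ℂ) ^ (s + ((n:ℂ) + 1))) _, ← div_div, div_eq_mul_inv _ ((2:ℂ) ^ (s + ((n:ℂ) + 1)))]
    ring
  have hswap := hab.tsum_comm
  calc (1 - (2 : ℂ) ^ (1 - s)) * riemannZeta s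
      = ∑' k : ℕ, (((2*k+1 : ℕ) : ℂ) ^ (-s) - ((2*(k+1) : ℕ) : ℂ) ^ (-s)) := lhs_eq hs
    _ = ∑' k, ∑' n, a n k := (tsum_congr fun k => ((perk hs k).tsum_eq).symm)
    _ = ∑' n, ∑' k, a n k := hswap
    _ = _ := (tsum_congr fun n => (hterm n).symm)
end

section
/- For every complex s with Re(s) > 1, ∑_{n≥1} [s(s+1)⋯(s+n-1)/n!] · (ζ(s+n) − 1) = 1. -/
open Complex Finset

noncomputable def aCoef (s : ℂ) (j : ℕ) : ℂ :=
  (∏ i ∈ Finset.range j, (s + i)) / (j.factorial : ℂ)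

lemma hasDerivAt_one_sub_cpow (w : ℂ) {z : ℂ} (hz : 0 < (1 - z).re) :
    HasDerivAt (fun u : ℂ => (1 - u) ^ w) (-(w * (1 - z) ^ (w - 1))) z := by
  have h : HasDerivAt (fun u : ℂ => 1 - u) (-1) z := by
    simpa using (hasDerivAt_id z).const_sub 1
  have := h.cpow_const (c := w) (Or.inl hz)
  simpa [mul_comm, mul_assoc] using this

lemma iteratedDeriv_one_sub_cpow (s : ℂ) (n : ℕ) :
    ∀ z : ℂ, 0 < (1 - z).re →
      iteratedDeriv n (fun u : ℂ => (1 - u) ^ (-s)) z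
        = (∏ i ∈ Finset.range n, (s + i)) * (1 - z) ^ (-s - n) := by
  induction n with
  | zero => intro z hz; simp
  | succ n ih =>
    intro z hz
    rw [iteratedDeriv_succ]
    have hU : IsOpen {u : ℂ | 0 < (1 - u).re} := by
      have : Continuous fun u : ℂ => (1 - u).re := (Complex.continuous_re.comp
        (continuous_const.sub continuous_id))
      exact isOpen_lt continuous_const this
    have hev : iteratedDeriv n (fun u : ℂ => (1 - u) ^ (-s))
        =ᶠ[nhds z] fun u => (∏ i ∈ Finset.range n, (s + i)) * (1 - u) ^ (-s - n) := by
      filter_upwards [hU.mem_nhds hz] with u hu using ih u hu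
    rw [hev.deriv_eq]
    have hd := ((hasDerivAt_one_sub_cpow (-s - n) hz).const_mul
      (∏ i ∈ Finset.range n, (s + i)))
    rw [hd.deriv]
    rw [Finset.prod_range_succ]
    push_cast
    ring_nf

lemma binomial_hasSum (s : ℂ) {x : ℂ} (hx : ‖x‖ < 1) :
    HasSum (fun n : ℕ => aCoef s n * x ^ n) ((1 - x) ^ (-s)) := by
  have hdiff : DifferentiableOn ℂ (fun u : ℂ => (1 - u) ^ (-s)) (Metric.ball 0 1) := by
    intro z hz
    have hz' : 0 < (1 - z).re := by
      have : |z.re| < 1 := lt_of_le_of_lt (Complex.abs_re_le_norm z) (by simpa using hz)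
      simp only [Complex.sub_re, Complex.one_re]
      linarith [abs_lt.mp this |>.2]
    exact ((hasDerivAt_one_sub_cpow (-s) hz').differentiableAt).differentiableWithinAt
  have hx' : x ∈ Metric.ball (0:ℂ) 1 := by simpa using hx
  have H := Complex.hasSum_taylorSeries_on_ball hdiff hx'
  convert H using 2 with n
  · rfl
  rw [iteratedDeriv_one_sub_cpow s n 0 (by norm_num)]
  simp [aCoef, smul_eq_mul, div_eq_inv_mul]
  ring

lemma binomial_hasSum_shift (s : ℂ) {x : ℂ} (hx : ‖x‖ < 1) :
    HasSum (fun n : ℕ => aCoef s (n + 1) * x ^ (n + 1)) ((1 - x) ^ (-s) - 1) := by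
  refine (hasSum_nat_add_iff (f := fun j => aCoef s j * x ^ j) 1).mpr ?_
  have : ((1 - x) ^ (-s) - 1) + ∑ i ∈ Finset.range 1, aCoef s i * x ^ i
      = (1 - x) ^ (-s) := by simp [aCoef]
  rw [this]
  exact binomial_hasSum s hx

lemma inner_sum_aux (s : ℂ) (k : ℕ) :
    ∑' n : ℕ, aCoef s (n+1) * ((k:ℂ)+2) ^ (-(s + ((n:ℂ)+1)))
      = ((k:ℂ)+1) ^ (-s) - ((k:ℂ)+2) ^ (-s) := by
  have hkpos : (0:ℝ) < (k:ℝ) + 2 := by positivity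
  have hmeq : ((k:ℂ)+2) = (((k:ℝ)+2 : ℝ) : ℂ) := by push_cast; ring
  have hmne : ((k:ℂ)+2) ≠ 0 := by
    rw [hmeq]
    exact_mod_cast Complex.ofReal_ne_zero.mpr (ne_of_gt hkpos)
  have hxnorm : ‖((k:ℂ)+2)⁻¹‖ < 1 := by
    rw [norm_inv, hmeq, Complex.norm_real, Real.norm_of_nonneg hkpos.le]
    rw [inv_lt_one_iff₀]
    right; linarith [Nat.cast_nonneg (α := ℝ) k]
  have hexp : ∀ n : ℕ, ((k:ℂ)+2) ^ (-(s + ((n:ℂ)+1)))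
      = (((k:ℂ)+2)⁻¹) ^ (n+1) * ((k:ℂ)+2) ^ (-s) := by
    intro n
    have h2 : ((k:ℂ)+2) ^ (-((n+1:ℕ):ℂ)) = (((k:ℂ)+2)⁻¹) ^ (n+1) := by
      rw [cpow_neg, cpow_natCast, inv_pow]
    rw [show -(s + ((n:ℂ)+1)) = -s + -(((n+1:ℕ):ℂ)) by push_cast; ring,
      cpow_add _ _ hmne, h2]
    ring
  have hHS := ((binomial_hasSum_shift s hxnorm).mul_right (((k:ℂ)+2) ^ (-s)))
  have heq : ∀ n : ℕ, aCoef s (n+1) * ((k:ℂ)+2) ^ (-(s + ((n:ℂ)+1)))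
      = aCoef s (n+1) * (((k:ℂ)+2)⁻¹) ^ (n+1) * ((k:ℂ)+2) ^ (-s) := by
    intro n; rw [hexp n]; ring
  rw [tsum_congr heq, hHS.tsum_eq, sub_mul, one_mul]
  have h1x : (1 - ((k:ℂ)+2)⁻¹) = ((((k:ℝ)+1)/((k:ℝ)+2) : ℝ) : ℂ) := by
    rw [hmeq]
    push_cast
    rw [eq_div_iff (by exact_mod_cast Complex.ofReal_ne_zero.mpr (ne_of_gt hkpos))]
    field_simp
    ring
  have key : (1 - ((k:ℂ)+2)⁻¹) ^ (-s) * ((k:ℂ)+2) ^ (-s) = ((k:ℂ)+1) ^ (-s) := by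
    rw [h1x, hmeq, ← mul_cpow_ofReal_nonneg (by positivity) (by positivity)]
    rw [show ((((k:ℝ)+1)/((k:ℝ)+2) : ℝ) : ℂ) * ((((k:ℝ)+2) : ℝ) : ℂ)
        = (((((k:ℝ)+1)/((k:ℝ)+2)) * (((k:ℝ)+2)) : ℝ) : ℂ) by push_cast; ring]
    rw [div_mul_cancel₀ _ (ne_of_gt hkpos)]
    push_cast; ring_nf
  rw [key]

lemma summable_aux (w : ℂ) (hw : 1 < w.re) : Summable (fun k : ℕ => ((k:ℂ)+1) ^ (-w)) := by
  have h := (Complex.summable_one_div_nat_cpow (p := w)).mpr hw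
  have h2 := ((summable_nat_add_iff 1).mpr h)
  refine h2.congr fun k => ?_
  rw [cpow_neg, one_div]
  push_cast
  ring_nf

lemma zeta_sub_one (w : ℂ) (hw : 1 < w.re) :
    riemannZeta w - 1 = ∑' k : ℕ, ((k:ℂ)+2) ^ (-w) := by
  rw [zeta_eq_tsum_one_div_nat_add_one_cpow hw]
  have hsum : Summable (fun n : ℕ => 1 / ((n:ℂ)+1) ^ w) := by
    refine (summable_aux w hw).congr fun k => ?_
    rw [cpow_neg, one_div]
  rw [Summable.tsum_eq_zero_add hsum]
  have : (1 : ℂ) / ((0:ℕ)+1:ℂ) ^ w = 1 := by norm_num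
  rw [this]
  rw [add_sub_cancel_left]
  congr 1 with k
  rw [cpow_neg, one_div]
  push_cast
  ring_nf

lemma telescope (s : ℂ) (hs : 1 < s.re) :
    ∑' k : ℕ, (((k:ℂ)+1) ^ (-s) - ((k:ℂ)+2) ^ (-s)) = 1 := by
  set g : ℕ → ℂ := fun k => ((k:ℂ)+1) ^ (-s) with hg
  have hgs : Summable g := summable_aux s hs
  have hgs' : Summable (fun k => g (k+1)) := (summable_nat_add_iff 1).mpr hgs
  have hterm : ∀ k : ℕ, ((k:ℂ)+1) ^ (-s) - ((k:ℂ)+2) ^ (-s) = g k - g (k+1) := by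
    intro k; simp only [hg]; push_cast; ring_nf
  have hsum : Summable (fun k => g k - g (k+1)) := hgs.sub hgs'
  have h1 : Filter.Tendsto (fun N => ∑ k ∈ Finset.range N, (g k - g (k+1)))
      Filter.atTop (nhds (∑' k, (g k - g (k+1)))) := hsum.hasSum.tendsto_sum_nat
  have h2 : Filter.Tendsto (fun N => ∑ k ∈ Finset.range N, (g k - g (k+1)))
      Filter.atTop (nhds 1) := by
    have heq : ∀ N, ∑ k ∈ Finset.range N, (g k - g (k+1)) = g 0 - g N := fun N =>
      Finset.sum_range_sub' g N
    simp only [heq]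
    have hg0 : g 0 = 1 := by simp [hg]
    rw [hg0]
    have : Filter.Tendsto g Filter.atTop (nhds 0) := hgs.tendsto_atTop_zero
    simpa using (tendsto_const_nhds.sub this)
  have := tendsto_nhds_unique h1 h2
  calc ∑' k : ℕ, (((k:ℂ)+1) ^ (-s) - ((k:ℂ)+2) ^ (-s)) = ∑' k, (g k - g (k+1)) := by
        congr 1 with k; exact hterm k
    _ = 1 := this

lemma double_summable (s : ℂ) (hs : 1 < s.re) :
    Summable (fun p : ℕ × ℕ =>
      aCoef s (p.1+1) * ((p.2:ℂ)+2) ^ (-(s + ((p.1:ℂ)+1)))) := by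
  rw [← summable_norm_iff]
  have hhalf : ‖(1/2 : ℂ)‖ < 1 := by norm_num
  have hBsum : Summable (fun n : ℕ => aCoef s (n+1) * (1/2 : ℂ) ^ (n + 1)) :=
    (summable_nat_add_iff (f := fun j : ℕ => aCoef s j * (1/2 : ℂ) ^ j) 1).mpr
      (binomial_hasSum s hhalf).summable
  have hBnorm : Summable (fun n : ℕ => ‖aCoef s (n+1)‖ * (1/2 : ℝ) ^ (n + 1)) := by
    refine hBsum.norm.congr fun n => ?_
    rw [norm_mul, norm_pow]
    norm_num
  have hknorm : Summable (fun k : ℕ => ((k:ℝ)+2) ^ (-s.re)) := by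
    have h := (Real.summable_one_div_nat_rpow (p := s.re)).mpr hs
    refine ((summable_nat_add_iff 2).mpr h).congr fun k => ?_
    rw [one_div, ← Real.rpow_neg (by positivity)]
    push_cast; ring_nf
  have hb : Summable (fun p : ℕ × ℕ =>
      (‖aCoef s (p.1+1)‖ * (1/2 : ℝ) ^ (p.1 + 1)) * ((p.2:ℝ)+2) ^ (-s.re)) :=
    hBnorm.mul_of_nonneg hknorm (fun n => by positivity) (fun k => by positivity)
  refine Summable.of_nonneg_of_le (fun p => norm_nonneg _) (fun p => ?_) hb
  obtain ⟨n, k⟩ := p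
  have hkpos : (0:ℝ) < (k:ℝ) + 2 := by positivity
  simp only
  rw [norm_mul]
  have hnorm : ‖((k:ℂ)+2) ^ (-(s + ((n:ℂ)+1)))‖
      = ((k:ℝ)+2) ^ (-(s.re + ((n:ℝ)+1))) := by
    rw [show ((k:ℂ)+2) = (((k:ℝ)+2 : ℝ) : ℂ) by push_cast; ring,
      Complex.norm_cpow_eq_rpow_re_of_pos hkpos]
    congr 1
  rw [hnorm]
  have hsplit : ((k:ℝ)+2) ^ (-(s.re + ((n:ℝ)+1)))
      = ((k:ℝ)+2) ^ (-s.re) * (((k:ℝ)+2) ^ (n+1 : ℕ))⁻¹ := by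
    have h2 : ((k:ℝ)+2) ^ (-((n+1:ℕ):ℝ)) = (((k:ℝ)+2) ^ (n+1 : ℕ))⁻¹ := by
      rw [Real.rpow_neg hkpos.le, Real.rpow_natCast]
    rw [show -(s.re + ((n:ℝ)+1)) = -s.re + (-((n+1:ℕ):ℝ)) by push_cast; ring,
      Real.rpow_add hkpos, h2]
  rw [hsplit]
  have hle : (((k:ℝ)+2) ^ (n+1 : ℕ))⁻¹ ≤ (1/2 : ℝ) ^ (n+1) := by
    rw [one_div, ← inv_pow]
    gcongr
    linarith [Nat.cast_nonneg (α := ℝ) k]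
  calc ‖aCoef s (n+1)‖ * (((k:ℝ)+2) ^ (-s.re) * (((k:ℝ)+2) ^ (n+1 : ℕ))⁻¹)
      ≤ ‖aCoef s (n+1)‖ * (((k:ℝ)+2) ^ (-s.re) * (1/2:ℝ) ^ (n+1)) := by
        gcongr
    _ = ‖aCoef s (n+1)‖ * (1/2:ℝ) ^ (n+1) * ((k:ℝ)+2) ^ (-s.re) := by ring

/-- For `Re s > 1`, `∑_{n≥1} [s(s+1)⋯(s+n-1)/n!] (ζ(s+n) − 1) = 1`. -/
theorem zeta_series_eq_one (s : ℂ) (hs : 1 < s.re) :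
    ∑' n : ℕ, (∏ i ∈ Finset.range (n + 1), (s + i)) / ((n + 1).factorial : ℂ) *
      (riemannZeta (s + (n + 1)) - 1) = 1 := by
  have hre : ∀ n : ℕ, 1 < (s + ((n:ℂ)+1)).re := by
    intro n
    simp only [Complex.add_re, Complex.one_re, Complex.natCast_re]
    linarith [Nat.cast_nonneg (α := ℝ) n]
  calc ∑' n : ℕ, (∏ i ∈ Finset.range (n + 1), (s + i)) / ((n + 1).factorial : ℂ) *
      (riemannZeta (s + (n + 1)) - 1)
      = ∑' n : ℕ, ∑' k : ℕ, aCoef s (n+1) * ((k:ℂ)+2) ^ (-(s + ((n:ℂ)+1))) := by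
        refine tsum_congr fun n => ?_
        rw [show (∏ i ∈ Finset.range (n + 1), (s + i)) / ((n + 1).factorial : ℂ)
            = aCoef s (n+1) from rfl,
          zeta_sub_one _ (hre n), ← tsum_mul_left]
    _ = ∑' k : ℕ, ∑' n : ℕ, aCoef s (n+1) * ((k:ℂ)+2) ^ (-(s + ((n:ℂ)+1))) := by
        have h : Summable (Function.uncurry fun (n k : ℕ) =>
            aCoef s (n+1) * ((k:ℂ)+2) ^ (-(s + ((n:ℂ)+1)))) := double_summable s hs
        exact (Summable.tsum_comm (f := fun (n k : ℕ) =>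
          aCoef s (n+1) * ((k:ℂ)+2) ^ (-(s + ((n:ℂ)+1)))) h).symm
    _ = ∑' k : ℕ, (((k:ℂ)+1) ^ (-s) - ((k:ℂ)+2) ^ (-s)) :=
        tsum_congr fun k => inner_sum_aux s k
    _ = 1 := telescope s hs
end

section
/- For every complex s with Re(s) > 1, ∑_{n≥1} [(-1)^{n-1} s(s+1)⋯(s+n-1)/n!] · (ζ(s+n) − 1) = 2^{-s}. -/
open Complex Finset

namespace ZetaAlt

noncomputable def c (s : ℂ) (n : ℕ) : ℂ :=
  (-1) ^ n * (∏ i ∈ Finset.range n, (s + i)) / (n.factorial : ℂ)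

lemma c_zero (s : ℂ) : c s 0 = 1 := by simp [c]

lemma c_succ (s : ℂ) (n : ℕ) : c s (n + 1) = -(s + n) / (n + 1) * c s n := by
  have h1 : ((n.factorial : ℂ)) ≠ 0 := by exact_mod_cast n.factorial_ne_zero
  have h2 : ((n:ℂ) + 1) ≠ 0 := Nat.cast_add_one_ne_zero n
  rw [c, c, Finset.prod_range_succ, Nat.factorial_succ]
  push_cast
  field_simp
  ring

lemma norm_c_succ (s : ℂ) (n : ℕ) :
    ‖c s (n + 1)‖ = ‖s + n‖ / ((n:ℝ) + 1) * ‖c s n‖ := by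
  have h : ((n:ℂ) + 1) = ((n+1:ℕ):ℂ) := by push_cast; ring
  rw [c_succ, norm_mul, norm_div, norm_neg, h, Complex.norm_natCast]
  push_cast
  ring

noncomputable def u (s : ℂ) (n : ℕ) : ℝ := ‖c s n‖ * ((n:ℝ) + 1) * (3/4 : ℝ) ^ (n - 1)

lemma u_nonneg (s : ℂ) (n : ℕ) : 0 ≤ u s n := mul_nonneg (mul_nonneg (norm_nonneg _) (by positivity)) (by positivity)

lemma summable_u (s : ℂ) : Summable (u s) := by
  apply summable_of_ratio_norm_eventually_le (r := 7/8) (by norm_num)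
  filter_upwards [Filter.eventually_ge_atTop (max 1 ⌈6 * ‖s‖⌉₊)] with n hn
  have hn1 : 1 ≤ n := le_of_max_le_left hn
  have hns : 6 * ‖s‖ ≤ n := (Nat.ceil_le.mp (le_of_max_le_right hn)).trans_eq rfl
  rw [Real.norm_of_nonneg (u_nonneg s _), Real.norm_of_nonneg (u_nonneg s _)]
  have hsn : ‖s + n‖ ≤ ‖s‖ + n := by
    simpa using norm_add_le s (n : ℂ)
  have hpow : (3/4 : ℝ) ^ (n + 1 - 1) = (3/4) * (3/4:ℝ) ^ (n - 1) := by
    obtain ⟨m, rfl⟩ := Nat.exists_eq_add_of_le hn1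
    simp [pow_succ]
    ring
  rw [u, u, norm_c_succ, hpow]
  push_cast
  have key : ‖s + n‖ / ((n:ℝ) + 1) * ((n:ℝ) + 1 + 1) * (3/4)
      ≤ 7/8 * ((n:ℝ) + 1) := by
    rw [div_mul_eq_mul_div, div_mul_eq_mul_div, div_le_iff₀ (by positivity)]
    have h2 : ‖s + n‖ * ((n:ℝ) + 1 + 1) * (3/4) ≤ (‖s‖ + n) * ((n:ℝ) + 2) * (3/4) := by
      have : (0:ℝ) ≤ ((n:ℝ) + 1 + 1) * (3/4) := by positivity
      nlinarith [norm_nonneg (s + (n:ℂ))]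
    refine h2.trans ?_
    have h3 : (1:ℝ) ≤ n := by exact_mod_cast hn1
    nlinarith [norm_nonneg s]
  calc ‖s + ↑n‖ / ((n:ℝ) + 1) * ‖c s n‖ * ((n:ℝ) + 1 + 1) * (3 / 4 * (3/4) ^ (n - 1))
      = (‖s + ↑n‖ / ((n:ℝ) + 1) * ((n:ℝ) + 1 + 1) * (3/4)) * (‖c s n‖ * (3/4) ^ (n - 1)) := by ring
    _ ≤ (7/8 * ((n:ℝ) + 1)) * (‖c s n‖ * (3/4) ^ (n - 1)) := by
        apply mul_le_mul_of_nonneg_right key (by positivity)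
    _ = 7/8 * (‖c s n‖ * ((n:ℝ) + 1) * (3/4) ^ (n - 1)) := by ring

/-- derivative term -/
noncomputable def d (s : ℂ) (n : ℕ) (y : ℝ) : ℂ := c s n * ((n : ℂ) * (y:ℂ) ^ (n - 1))

lemma d_norm_le (s : ℂ) (n : ℕ) {y : ℝ} (hy : |y| ≤ 3/4) : ‖d s n y‖ ≤ u s n := by
  rw [d, u, norm_mul, norm_mul, Complex.norm_natCast, norm_pow, Complex.norm_real,
    Real.norm_eq_abs]
  have h1 : |y| ^ (n-1) ≤ (3/4:ℝ) ^ (n-1) := pow_le_pow_left₀ (abs_nonneg y) hy _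
  have h2 : (n:ℝ) ≤ (n:ℝ) + 1 := by linarith
  calc ‖c s n‖ * ((n:ℝ) * |y| ^ (n-1)) ≤ ‖c s n‖ * (((n:ℝ)+1) * (3/4:ℝ) ^ (n-1)) := by
        apply mul_le_mul_of_nonneg_left _ (norm_nonneg _)
        exact mul_le_mul h2 h1 (by positivity) (by positivity)
    _ = ‖c s n‖ * ((n:ℝ)+1) * (3/4:ℝ) ^ (n-1) := by ring

lemma term_norm_le (s : ℂ) (n : ℕ) {y : ℝ} (hy : |y| ≤ 3/4) :
    ‖c s n * (y:ℂ) ^ n‖ ≤ u s n := by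
  rw [u, norm_mul, norm_pow, Complex.norm_real, Real.norm_eq_abs]
  have h1 : |y| ^ n ≤ (3/4:ℝ) ^ (n-1) := by
    calc |y| ^ n ≤ (3/4:ℝ) ^ n := pow_le_pow_left₀ (abs_nonneg y) hy _
      _ ≤ (3/4:ℝ) ^ (n-1) := pow_le_pow_of_le_one (by norm_num) (by norm_num) (Nat.sub_le n 1)
  calc ‖c s n‖ * |y| ^ n ≤ ‖c s n‖ * (3/4:ℝ) ^ (n-1) :=
        mul_le_mul_of_nonneg_left h1 (norm_nonneg _)
    _ ≤ ‖c s n‖ * ((n:ℝ)+1) * (3/4:ℝ) ^ (n-1) := by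
        have h3 : (0:ℝ) ≤ (n:ℝ) := Nat.cast_nonneg n
        nlinarith [mul_nonneg (norm_nonneg (c s n)) (pow_nonneg (by norm_num : (0:ℝ) ≤ 3/4) (n-1))]

lemma summable_term (s : ℂ) {y : ℝ} (hy : |y| ≤ 3/4) :
    Summable (fun n => c s n * (y:ℂ) ^ n) :=
  Summable.of_norm ((summable_u s).of_nonneg_of_le (fun _ => norm_nonneg _)
    (fun n => term_norm_le s n hy))

lemma summable_d (s : ℂ) {y : ℝ} (hy : |y| ≤ 3/4) : Summable (fun n => d s n y) :=
  Summable.of_norm ((summable_u s).of_nonneg_of_le (fun _ => norm_nonneg _)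
    (fun n => d_norm_le s n hy))

lemma hasDerivAt_term (s : ℂ) (n : ℕ) (y : ℝ) :
    HasDerivAt (fun z : ℝ => c s n * (z:ℂ) ^ n) (d s n y) y := by
  have h : HasDerivAt (fun z : ℝ => ((z ^ n : ℝ) : ℂ)) ((((n:ℝ) * y ^ (n-1) : ℝ)) : ℂ) y :=
    (hasDerivAt_pow n y).ofReal_comp
  have h2 : HasDerivAt (fun z : ℝ => (z:ℂ) ^ n) (((n:ℝ) * y ^ (n-1) : ℝ) : ℂ) y := by
    simpa [Complex.ofReal_pow] using h
  have := h2.const_mul (c s n)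
  simpa [d, mul_comm, mul_assoc, mul_left_comm] using this

def t : Set ℝ := Set.Ioo (-(3/4) : ℝ) (3/4)

lemma mem_t_abs {y : ℝ} (hy : y ∈ t) : |y| ≤ 3/4 := by
  rw [abs_le]; exact ⟨hy.1.le, hy.2.le⟩

noncomputable def G (s : ℂ) (y : ℝ) : ℂ := ∑' n, c s n * (y:ℂ) ^ n
noncomputable def D (s : ℂ) (y : ℝ) : ℂ := ∑' n, d s n y

lemma hasDerivAt_G (s : ℂ) {y : ℝ} (hy : y ∈ t) : HasDerivAt (G s) (D s y) y := by
  apply hasDerivAt_tsum_of_isPreconnected (summable_u s) isOpen_Ioo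
    (convex_Ioo _ _).isPreconnected
    (fun n z _ => hasDerivAt_term s n z)
    (fun n z hz => d_norm_le s n (mem_t_abs hz))
    (Set.mem_Ioo.2 ⟨by norm_num, by norm_num⟩)
    (summable_term s (y := 0) (by norm_num))
    hy

lemma ode (s : ℂ) {y : ℝ} (hy : |y| ≤ 3/4) :
    (1 + (y:ℂ)) * D s y = -s * G s y := by
  have hd := summable_d s hy
  have ht := summable_term s hy
  have hshift : Summable (fun n => d s (n+1) y) := by
    rw [← summable_nat_add_iff 1] at hd
    exact hd
  have hyd : ∀ n, (y:ℂ) * d s n y = c s n * ((n:ℂ) * (y:ℂ) ^ n) := by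
    intro n
    cases n with
    | zero => simp [d]
    | succ m => simp only [d, Nat.add_sub_cancel, pow_succ]; push_cast; ring
  have h1 : D s y = ∑' n, d s (n+1) y := by
    rw [D, hd.tsum_eq_zero_add]
    simp [d]
  have h2 : (y:ℂ) * D s y = ∑' n, c s n * ((n:ℂ) * (y:ℂ) ^ n) := by
    rw [D, ← tsum_mul_left]
    exact tsum_congr hyd
  have h3 : (1 + (y:ℂ)) * D s y = D s y + (y:ℂ) * D s y := by ring
  rw [h3, h2, h1, ← Summable.tsum_add hshift (by simpa [funext hyd] using hd.mul_left (y:ℂ))]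
  rw [G, ← tsum_mul_left]
  apply tsum_congr
  intro n
  have hrec : c s (n+1) * ((n:ℂ)+1) = -(s+n) * c s n := by
    rw [c_succ]
    have h2 : ((n:ℂ) + 1) ≠ 0 := Nat.cast_add_one_ne_zero n
    field_simp
  have : d s (n+1) y = c s (n+1) * (((n:ℂ)+1) * (y:ℂ) ^ n) := by
    rw [d]; push_cast; ring_nf
  rw [this]
  calc c s (n+1) * (((n:ℂ)+1) * (y:ℂ)^n) + c s n * ((n:ℂ) * (y:ℂ)^n)
      = (c s (n+1) * ((n:ℂ)+1) + c s n * (n:ℂ)) * (y:ℂ)^n := by ring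
    _ = (-(s+n) * c s n + c s n * (n:ℂ)) * (y:ℂ)^n := by rw [hrec]
    _ = -s * (c s n * (y:ℂ)^n) := by ring

lemma one_add_pos {y : ℝ} (hy : y ∈ t) : (0:ℝ) < 1 + y := by
  simp only [t, Set.mem_Ioo] at hy; linarith [hy.1]

lemma hasDerivAt_F (s : ℂ) {y : ℝ} (hy : y ∈ t) :
    HasDerivAt (fun z : ℝ => G s z * (1 + (z:ℂ)) ^ s) 0 y := by
  have hpos : (0:ℝ) < 1 + y := one_add_pos hy
  have hslit : (1 + (y:ℝ) : ℂ) ∈ slitPlane := by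
    rw [Complex.mem_slitPlane_iff]
    left; simpa using hpos
  have hC : HasDerivAt (fun w : ℂ => (1 + w) ^ s) (s * (1 + (y:ℂ)) ^ (s - 1) * 1) ((y:ℝ) : ℂ) :=
    HasDerivAt.cpow_const ((hasDerivAt_id _).const_add 1) (by simpa using hslit)
  have hpow : HasDerivAt (fun z : ℝ => (1 + (z:ℂ)) ^ s) (s * (1 + (y:ℂ)) ^ (s - 1) * 1) y :=
    hC.comp_ofReal
  have hprod := (hasDerivAt_G s hy).mul hpow
  have hne : (1 + (y:ℂ)) ≠ 0 := by
    have : ((1 + y : ℝ) : ℂ) ≠ 0 := Complex.ofReal_ne_zero.2 hpos.ne'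
    simpa using this
  have hsplit : (1 + (y:ℂ)) ^ s = (1 + (y:ℂ)) ^ (s - 1) * (1 + (y:ℂ)) := by
    rw [Complex.cpow_sub _ _ hne, Complex.cpow_one]
    field_simp
  have hzero : D s y * (1 + (y:ℂ)) ^ s + G s y * (s * (1 + (y:ℂ)) ^ (s - 1) * 1) = 0 := by
    rw [hsplit]
    have hode := ode s (mem_t_abs hy)
    calc D s y * ((1 + (y:ℂ)) ^ (s-1) * (1 + (y:ℂ))) + G s y * (s * (1 + (y:ℂ)) ^ (s-1) * 1)
        = (1 + (y:ℂ)) ^ (s-1) * ((1 + (y:ℂ)) * D s y + s * G s y) := by ring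
      _ = (1 + (y:ℂ)) ^ (s-1) * (-s * G s y + s * G s y) := by rw [hode]
      _ = 0 := by ring
  rw [← hzero]
  exact hprod

lemma G_mul_eq_one (s : ℂ) {x : ℝ} (hx : x ∈ t) :
    G s x * (1 + (x:ℂ)) ^ s = 1 := by
  set F := fun z : ℝ => G s z * (1 + (z:ℂ)) ^ s with hF
  have hconst : ‖F x - F 0‖ ≤ 0 * ‖x - 0‖ := by
    apply Convex.norm_image_sub_le_of_norm_hasDerivWithin_le
      (f' := fun _ => (0:ℂ))
      (fun z hz => (hasDerivAt_F s hz).hasDerivWithinAt)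
      (fun z _ => by simp) (convex_Ioo _ _)
      (Set.mem_Ioo.2 ⟨by norm_num, by norm_num⟩) hx
  have hFx : F x = F 0 := by
    rw [zero_mul] at hconst
    have h2 := le_antisymm hconst (norm_nonneg _)
    rwa [norm_eq_zero, sub_eq_zero] at h2
  rw [hF] at hFx
  simp only at hFx
  rw [hFx]
  have hG0 : G s 0 = 1 := by
    rw [G]
    rw [tsum_eq_single 0 (fun n hn => by simp [zero_pow hn])]
    simp [c_zero]
  rw [hG0]
  norm_num

lemma binom_hasSum (s : ℂ) {x : ℝ} (hx : |x| ≤ 1/2) :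
    HasSum (fun n => c s n * (x:ℂ) ^ n) ((1 + (x:ℂ)) ^ (-s)) := by
  have hxt : x ∈ t := by
    rw [abs_le] at hx
    exact Set.mem_Ioo.2 ⟨by linarith [hx.1], by linarith [hx.2]⟩
  have h := (summable_term s (mem_t_abs hxt)).hasSum
  have hkey := G_mul_eq_one s hxt
  have hGx : G s x = (1 + (x:ℂ)) ^ (-s) := by
    rw [Complex.cpow_neg]
    exact eq_inv_of_mul_eq_one_left hkey
  rwa [← G, hGx] at h

lemma zeta_tail {w : ℂ} (hw : 1 < w.re) :
    HasSum (fun k : ℕ => ((k:ℂ) + 2) ^ (-w)) (riemannZeta w - 1) := by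
  have hsum : Summable (fun n : ℕ => 1 / ((n:ℂ) + 1) ^ w) := by
    apply Summable.of_norm
    have base : Summable (fun n : ℕ => (((n:ℝ) + 1) ^ w.re)⁻¹) := by
      have h := (summable_nat_add_iff 1).2 (Real.summable_nat_rpow_inv.mpr hw)
      refine h.congr fun n => ?_
      push_cast
      ring_nf
    refine base.congr fun n => ?_
    have hcast : ((n:ℂ) + 1) = ((n+1 : ℕ) : ℂ) := by push_cast; ring
    rw [hcast, one_div, norm_inv, norm_natCast_cpow_of_pos (Nat.succ_pos n)]
    push_cast
    ring_nf
  have hz := zeta_eq_tsum_one_div_nat_add_one_cpow hw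
  have h : HasSum (fun n : ℕ => 1 / ((n:ℂ) + 1) ^ w) (riemannZeta w) := by
    rw [hz]; exact hsum.hasSum
  have h2 := (hasSum_nat_add_iff' 1).2 h
  have hval : riemannZeta w - ∑ i ∈ Finset.range 1, 1 / ((i:ℂ)+1)^w = riemannZeta w - 1 := by
    simp
  rw [hval] at h2
  have key : (fun n : ℕ => ((n:ℂ) + 2) ^ (-w)) = (fun n : ℕ => 1 / (((n+1:ℕ):ℂ) + 1) ^ w) := by
    funext n
    rw [Complex.cpow_neg, one_div]
    congr 2
    push_cast; ring
  rw [key]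
  exact h2


lemma row_hasSum (s : ℂ) (k : ℕ) :
    HasSum (fun n : ℕ => -c s (n+1) * ((k:ℂ) + 2) ^ (-(s + n + 1)))
      (((k:ℂ) + 2) ^ (-s) - ((k:ℂ) + 3) ^ (-s)) := by
  set K : ℝ := (k:ℝ) + 2 with hK
  have hK2 : (2:ℝ) ≤ K := by rw [hK]; linarith [Nat.cast_nonneg (α := ℝ) k]
  have hKpos : (0:ℝ) < K := by linarith
  have hx : |1/K| ≤ 1/2 := by
    rw [abs_of_pos (by positivity)]
    rw [div_le_div_iff₀ hKpos (by norm_num)]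
    linarith
  have h0 := binom_hasSum s hx
  have h1 := (hasSum_nat_add_iff' 1).2 h0
  have hval1 : (1 + ((1/K:ℝ):ℂ)) ^ (-s) - ∑ i ∈ Finset.range 1, c s i * ((1/K:ℝ):ℂ) ^ i
      = (1 + ((1/K:ℝ):ℂ)) ^ (-s) - 1 := by
    simp [c_zero]
  rw [hval1] at h1
  have h2 := (h1.neg).mul_left (((k:ℂ) + 2) ^ (-s))
  have hKC : ((K:ℝ):ℂ) = (k:ℂ) + 2 := by rw [hK]; push_cast; ring
  have hKne : ((k:ℂ) + 2) ≠ 0 := by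
    rw [← hKC]
    exact_mod_cast hKpos.ne'
  -- identify the function
  have hfun : ∀ n : ℕ, ((k:ℂ) + 2) ^ (-s) * -(c s (n+1) * ((1/K:ℝ):ℂ) ^ (n+1))
      = -c s (n+1) * ((k:ℂ) + 2) ^ (-(s + n + 1)) := by
    intro n
    have e1 : ((1/K:ℝ):ℂ) = ((k:ℂ) + 2)⁻¹ := by
      push_cast [hK]
      rw [one_div]
    have e2 : ((k:ℂ) + 2) ^ (-(s + n + 1))
        = ((k:ℂ) + 2) ^ (-s) * (((k:ℂ) + 2) ^ ((n:ℕ)+1 : ℕ))⁻¹ := by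
      have ha : (-(s + n + 1)) = -s + (-((n:ℂ)+1)) := by ring
      rw [ha, Complex.cpow_add _ _ hKne]
      congr 1
      have hb : -((n:ℂ)+1) = -((((n+1:ℕ)):ℂ)) := by push_cast; ring
      rw [hb, Complex.cpow_neg, Complex.cpow_natCast]
    rw [e1, e2, inv_pow]
    ring
  -- identify the value
  have hmul : ((k:ℂ) + 2) ^ (-s) * (1 + ((1/K:ℝ):ℂ)) ^ (-s) = ((k:ℂ) + 3) ^ (-s) := by
    have h1K : (0:ℝ) ≤ 1 + 1/K := by positivity
    have : ((K * (1 + 1/K) : ℝ):ℂ) ^ (-s) = ((K:ℝ):ℂ) ^ (-s) * (((1 + 1/K : ℝ)):ℂ) ^ (-s) := by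
      rw [Complex.ofReal_mul]
      exact mul_cpow_ofReal_nonneg hKpos.le h1K (-s)
    have hprod : (K * (1 + 1/K) : ℝ) = (k:ℝ) + 3 := by
      field_simp [hK]
      ring
    rw [hprod] at this
    have hc1 : (((k:ℝ) + 3 : ℝ):ℂ) = (k:ℂ) + 3 := by push_cast; ring
    have hc2 : (((1 + 1/K : ℝ)):ℂ) = 1 + ((1/K:ℝ):ℂ) := by push_cast; ring
    rw [hc1, hc2, hKC] at this
    exact this.symm
  have hval2 : ((k:ℂ) + 2) ^ (-s) * -((1 + ((1/K:ℝ):ℂ)) ^ (-s) - 1)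
      = ((k:ℂ) + 2) ^ (-s) - ((k:ℂ) + 3) ^ (-s) := by
    rw [neg_sub, mul_sub, mul_one, hmul]
  rw [← funext hfun, ← hval2]
  exact h2

lemma telescope (s : ℂ) (hs : 1 < s.re) :
    HasSum (fun k : ℕ => ((k:ℂ)+2)^(-s) - ((k:ℂ)+3)^(-s)) ((2:ℂ)^(-s)) := by
  set g : ℕ → ℂ := fun k => ((k:ℂ)+2)^(-s) with hg
  have hnorm : ∀ k : ℕ, ‖g k‖ = ((k:ℝ)+2) ^ (-s.re) := by
    intro k
    have : ((k:ℂ)+2) = (((k+2:ℕ)):ℂ) := by push_cast; ring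
    rw [hg]
    simp only
    rw [this, norm_natCast_cpow_of_pos (by positivity), Complex.neg_re]
    push_cast
    ring_nf
  have hsg : Summable g := by
    apply Summable.of_norm
    have base : Summable (fun k : ℕ => ((k:ℝ)+2) ^ (-s.re)) := by
      have h := (summable_nat_add_iff 2).2 (Real.summable_nat_rpow.mpr (by linarith : -s.re < -1))
      refine h.congr fun k => ?_
      push_cast
      ring_nf
    exact base.congr fun k => (hnorm k).symm
  have hsg1 : Summable (fun k => g (k+1)) := (summable_nat_add_iff 1).2 hsg
  have hfun : (fun k : ℕ => ((k:ℂ)+2)^(-s) - ((k:ℂ)+3)^(-s)) = fun k => g k - g (k+1) := by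
    funext k
    rw [hg]
    simp only
    congr 2
    push_cast
    ring
  rw [hfun]
  have hsum := (hsg.sub hsg1)
  have htend0 : Filter.Tendsto g Filter.atTop (nhds 0) := by
    rw [tendsto_zero_iff_norm_tendsto_zero]
    have h1 : Filter.Tendsto (fun k : ℕ => ((k:ℝ)+2)) Filter.atTop Filter.atTop :=
      Filter.tendsto_atTop_add_const_right _ 2 tendsto_natCast_atTop_atTop
    have h2 := (tendsto_rpow_neg_atTop (by linarith : 0 < s.re)).comp h1
    refine h2.congr fun k => (hnorm k).symm
  have hps : ∀ N, ∑ k ∈ Finset.range N, (g k - g (k+1)) = g 0 - g N :=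
    fun N => Finset.sum_range_sub' g N
  have h1 := hsum.hasSum.tendsto_sum_nat
  have h2 : Filter.Tendsto (fun N => ∑ k ∈ Finset.range N, (g k - g (k+1)))
      Filter.atTop (nhds (g 0 - 0)) := by
    simp only [hps]
    exact Filter.Tendsto.const_sub _ htend0
  have hval : ∑' k, (g k - g (k+1)) = g 0 - 0 := tendsto_nhds_unique h1 h2
  have hg0 : g 0 - 0 = (2:ℂ)^(-s) := by
    rw [hg]; simp
  rw [← hg0, ← hval]
  exact hsum.hasSum

lemma summable_double (s : ℂ) (hs : 1 < s.re) :
    Summable (fun p : ℕ × ℕ => -c s (p.1+1) * ((p.2:ℂ) + 2) ^ (-(s + p.1 + 1))) := by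
  apply Summable.of_norm
  have ha : Summable (fun n : ℕ => ‖c s (n+1)‖ * (1/2:ℝ) ^ n) := by
    apply ((summable_nat_add_iff 1).2 (summable_u s)).of_nonneg_of_le
      (fun n => by positivity)
    intro n
    rw [u]
    have h1 : (1/2:ℝ) ^ n ≤ (3/4:ℝ) ^ n := pow_le_pow_left₀ (by norm_num) (by norm_num) n
    have h2 : ((n+1:ℕ):ℝ) + 1 ≥ 1 := by push_cast; linarith [Nat.cast_nonneg (α := ℝ) n]
    have h3 : (n+1) - 1 = n := by omega
    rw [h3]
    calc ‖c s (n+1)‖ * (1/2:ℝ)^n ≤ ‖c s (n+1)‖ * (3/4:ℝ)^n :=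
          mul_le_mul_of_nonneg_left h1 (norm_nonneg _)
      _ ≤ ‖c s (n+1)‖ * (((n+1:ℕ):ℝ)+1) * (3/4:ℝ)^n := by
          nlinarith [mul_nonneg (norm_nonneg (c s (n+1)))
            (pow_nonneg (by norm_num : (0:ℝ) ≤ 3/4) n)]
  have hb : Summable (fun k : ℕ => ((k:ℝ)+2) ^ (-s.re - 1)) := by
    have h := (summable_nat_add_iff 2).2 (Real.summable_nat_rpow.mpr (by linarith : -s.re - 1 < -1))
    refine h.congr fun k => ?_
    push_cast
    ring_nf
  have hprod := ha.mul_of_nonneg hb (fun n => by positivity) (fun k => by positivity)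
  apply hprod.of_nonneg_of_le (fun p => norm_nonneg _)
  rintro ⟨n, k⟩
  simp only [norm_mul, norm_neg]
  have hc : ((k:ℂ)+2) = (((k+2:ℕ)):ℂ) := by push_cast; ring
  rw [hc, norm_natCast_cpow_of_pos (by positivity)]
  have hre : (-(s + (n:ℂ) + 1)).re = -s.re - 1 + (-(n:ℝ)) := by
    simp [Complex.add_re, Complex.neg_re, Complex.natCast_re, Complex.one_re]
    ring
  rw [hre]
  have hk2 : (0:ℝ) < ((k+2:ℕ):ℝ) := by positivity
  rw [Real.rpow_add hk2]
  have hsplit : (((k+2:ℕ)):ℝ) ^ (-(n:ℝ)) ≤ (1/2:ℝ) ^ n := by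
    have e : (((k+2:ℕ)):ℝ) ^ (-(n:ℝ)) = ((((k+2:ℕ)):ℝ) ^ (n:ℕ))⁻¹ := by
      rw [Real.rpow_neg hk2.le, Real.rpow_natCast]
    rw [e]
    have h2n : (2:ℝ) ^ n ≤ (((k+2:ℕ)):ℝ) ^ n := by
      apply pow_le_pow_left₀ (by norm_num)
      push_cast; linarith [Nat.cast_nonneg (α := ℝ) k]
    calc ((((k+2:ℕ)):ℝ) ^ n)⁻¹ ≤ ((2:ℝ) ^ n)⁻¹ := inv_anti₀ (by positivity) h2n
      _ = (1/2:ℝ) ^ n := by rw [one_div, inv_pow]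
  have hbase : (((k+2:ℕ)):ℝ) ^ (-s.re - 1) = ((k:ℝ)+2) ^ (-s.re - 1) := by push_cast; ring_nf
  calc ‖c s (n+1)‖ * ((((k+2:ℕ)):ℝ) ^ (-s.re-1) * (((k+2:ℕ)):ℝ) ^ (-(n:ℝ)))
      ≤ ‖c s (n+1)‖ * ((((k+2:ℕ)):ℝ) ^ (-s.re-1) * (1/2:ℝ) ^ n) := by
        apply mul_le_mul_of_nonneg_left _ (norm_nonneg _)
        apply mul_le_mul_of_nonneg_left hsplit (by positivity)
    _ = ‖c s (n+1)‖ * (1/2:ℝ) ^ n * (((k:ℝ)+2) ^ (-s.re-1)) := by rw [hbase]; ring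

end ZetaAlt

/-- For `Re s > 1`, `∑_{n≥1} [(-1)^{n-1} s(s+1)⋯(s+n-1)/n!] (ζ(s+n) − 1) = 2^{-s}`. -/
theorem zeta_alternating_series (s : ℂ) (hs : 1 < s.re) :
    ∑' n : ℕ, ((-1) ^ n * (∏ i ∈ Finset.range (n + 1), (s + i)) / ((n + 1).factorial : ℂ)) *
      (riemannZeta (s + (n + 1)) - 1) = (2 : ℂ) ^ (-s) := by
  classical
  set f : ℕ → ℕ → ℂ := fun n k => -ZetaAlt.c s (n+1) * ((k:ℂ) + 2) ^ (-(s + n + 1)) with hf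
  have hterm : ∀ n : ℕ,
      ((-1) ^ n * (∏ i ∈ Finset.range (n + 1), (s + i)) / ((n + 1).factorial : ℂ)) *
        (riemannZeta (s + (n + 1)) - 1) = ∑' k, f n k := by
    intro n
    have hw : 1 < (s + ((n:ℂ) + 1)).re := by
      simp only [Complex.add_re, Complex.natCast_re, Complex.one_re]
      linarith [Nat.cast_nonneg (α := ℝ) n]
    have hz := ZetaAlt.zeta_tail hw
    have h1 := hz.mul_left (-ZetaAlt.c s (n+1))
    have hc : ((-1:ℂ)) ^ n * (∏ i ∈ Finset.range (n + 1), (s + i)) / ((n + 1).factorial : ℂ)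
        = -ZetaAlt.c s (n+1) := by
      rw [ZetaAlt.c, pow_succ]
      ring
    have hassoc : (fun k : ℕ => f n k)
        = fun k : ℕ => -ZetaAlt.c s (n+1) * ((k:ℂ) + 2) ^ (-(s + ((n:ℂ) + 1))) := by
      funext k
      rw [hf]
      simp only
      rw [add_assoc]
    rw [hc, hassoc, ← h1.tsum_eq]
  have hdouble : Summable (Function.uncurry f) := by
    have := ZetaAlt.summable_double s hs
    exact this
  calc ∑' n : ℕ, ((-1) ^ n * (∏ i ∈ Finset.range (n + 1), (s + i)) / ((n + 1).factorial : ℂ)) *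
      (riemannZeta (s + (n + 1)) - 1)
      = ∑' n, ∑' k, f n k := tsum_congr hterm
    _ = ∑' k, ∑' n, f n k := Summable.tsum_comm hdouble.prod_symm
    _ = ∑' k : ℕ, (((k:ℂ)+2)^(-s) - ((k:ℂ)+3)^(-s)) :=
        tsum_congr fun k => (ZetaAlt.row_hasSum s k).tsum_eq
    _ = (2:ℂ) ^ (-s) := (ZetaAlt.telescope s hs).tsum_eq
end

section
/- For every complex s with Re(s) > 1, ζ(s, 1/2) = (2^s − 1) ζ(s), and consequently ∑_{n≥1} ((-1)^n/n!)(−1/2)^n s(s+1)⋯(s+n-1) ζ(s+n) = (2^s − 2) ζ(s); i.e., substituting α = −1/2 in the power series of ζ_1(s, α) yields Ramaswami's identity. -/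
open Complex Finset
open Polynomial
set_option maxHeartbeats 1000000

lemma ascPochhammer_eval_eq_prodC (s : ℂ) (n : ℕ) :
    (ascPochhammer ℂ n).eval s = ∏ i ∈ Finset.range n, (s + i) := by
  induction n with
  | zero => simp
  | succ n ih => rw [ascPochhammer_succ_eval, ih, Finset.prod_range_succ]

lemma ascPochhammer_eval_eq_prodR (r : ℝ) (n : ℕ) :
    (ascPochhammer ℝ n).eval r = ∏ i ∈ Finset.range n, (r + i) := by
  induction n with
  | zero => simp
  | succ n ih => rw [ascPochhammer_succ_eval, ih, Finset.prod_range_succ]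

lemma isOpen_repos : IsOpen {z : ℂ | 0 < (1 - z).re} :=
  isOpen_lt continuous_const (Complex.continuous_re.comp (continuous_const.sub continuous_id))

lemma iteratedDeriv_one_sub_cpow_s17 (s : ℂ) (n : ℕ) :
    Set.EqOn (iteratedDeriv n (fun w : ℂ => (1 - w) ^ (-s)))
      (fun z => (ascPochhammer ℂ n).eval s * (1 - z) ^ (-s - n)) {z : ℂ | 0 < (1 - z).re} := by
  induction n with
  | zero =>
    intro z hz
    simp [iteratedDeriv_zero, sub_zero]
  | succ n ih =>
    intro z hz
    rw [iteratedDeriv_succ]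
    have hev : iteratedDeriv n (fun w : ℂ => (1 - w) ^ (-s)) =ᶠ[nhds z]
        (fun z => (ascPochhammer ℂ n).eval s * (1 - z) ^ (-s - n)) :=
      Filter.eventuallyEq_of_mem (isOpen_repos.mem_nhds hz) ih
    rw [hev.deriv_eq]
    have h1 : HasDerivAt (fun z : ℂ => 1 - z) (-1) z := (hasDerivAt_id z).const_sub 1
    have hd : HasDerivAt (fun z : ℂ => (1 - z) ^ (-s - n))
        ((-s - n) * (1 - z) ^ (-s - n - 1) * (-1)) z :=
      h1.cpow_const (Complex.mem_slitPlane_iff.mpr (Or.inl hz))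
    rw [deriv_const_mul _ hd.differentiableAt, hd.deriv]
    rw [ascPochhammer_succ_eval]
    have : -s - (n + 1 : ℕ) = -s - n - 1 := by push_cast; ring
    rw [this]
    ring

lemma hasSum_binomial_s17 (s z : ℂ) (hz : ‖z‖ < 1) :
    HasSum (fun n : ℕ => (ascPochhammer ℂ n).eval s / n.factorial * z ^ n)
      ((1 - z) ^ (-s)) := by
  have hre : ∀ w : ℂ, w ∈ Metric.ball (0:ℂ) 1 → 0 < (1 - w).re := by
    intro w hw
    simp only [Metric.mem_ball, dist_zero_right] at hw
    have : w.re ≤ ‖w‖ := Complex.re_le_norm w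
    simp only [Complex.sub_re, Complex.one_re]
    linarith
  have hdiff : DifferentiableOn ℂ (fun w : ℂ => (1 - w) ^ (-s)) (Metric.ball 0 1) := by
    intro w hw
    have h1 : HasDerivAt (fun z : ℂ => 1 - z) (-1) w := (hasDerivAt_id w).const_sub 1
    exact (h1.cpow_const (Complex.mem_slitPlane_iff.mpr
      (Or.inl (hre w hw)))).differentiableAt.differentiableWithinAt
  have H := Complex.hasSum_taylorSeries_on_ball hdiff
    (by simpa [Metric.mem_ball, dist_zero_right] using hz)
  have h0 : (0:ℂ) ∈ {z : ℂ | 0 < (1 - z).re} := by norm_num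
  convert H using 2 with n
  case e'_3 => rfl
  rw [iteratedDeriv_one_sub_cpow_s17 s n h0]
  simp only [sub_zero, one_cpow, smul_eq_mul]
  ring

lemma hasSum_zeta' (s : ℂ) (hs : 1 < s.re) :
    HasSum (fun n : ℕ => ((n : ℂ)) ^ (-s)) (riemannZeta s) := by
  have h : Summable (fun n : ℕ => ((n : ℂ)) ^ (-s)) := by
    have := Complex.summable_one_div_nat_cpow.mpr hs
    simpa [cpow_neg, one_div] using this
  have h2 : ∑' n : ℕ, ((n : ℂ)) ^ (-s) = riemannZeta s := by
    rw [zeta_eq_tsum_one_div_nat_cpow hs]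
    simp [cpow_neg, one_div]
  exact h2 ▸ h.hasSum

lemma hasSum_half (s : ℂ) (hs : 1 < s.re) :
    HasSum (fun n : ℕ => ((n : ℂ) + 1 / 2) ^ (-s)) (((2:ℂ) ^ s - 1) * riemannZeta s) := by
  have hsne : -s ≠ 0 := neg_ne_zero.mpr (fun h => by rw [h] at hs; norm_num at hs)
  have hζ := hasSum_zeta' s hs
  have heven : HasSum (fun k : ℕ => ((2 * k : ℕ) : ℂ) ^ (-s)) ((2:ℂ) ^ (-s) * riemannZeta s) := by
    refine (hζ.mul_left ((2:ℂ) ^ (-s))).congr_fun fun k => ?_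
    rcases Nat.eq_zero_or_pos k with rfl | hk
    · simp [Complex.zero_cpow hsne]
    · have hc : ((2 * k : ℕ) : ℂ) = ((2:ℝ):ℂ) * ((k:ℝ):ℂ) := by push_cast; ring
      rw [hc, mul_cpow_ofReal_nonneg (by norm_num) k.cast_nonneg]
      norm_num
  have hsum_odd : Summable (fun k : ℕ => ((2 * k + 1 : ℕ) : ℂ) ^ (-s)) :=
    hζ.summable.comp_injective (fun a b h => by omega)
  have hodd : HasSum (fun k : ℕ => ((2 * k + 1 : ℕ) : ℂ) ^ (-s))
      (riemannZeta s - (2:ℂ) ^ (-s) * riemannZeta s) := by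
    obtain ⟨b, hb⟩ := hsum_odd
    have h := HasSum.even_add_odd (f := fun n : ℕ => ((n:ℕ):ℂ)^(-s)) heven hb
    have hbe : riemannZeta s = (2:ℂ) ^ (-s) * riemannZeta s + b := hζ.unique h
    have : b = riemannZeta s - (2:ℂ) ^ (-s) * riemannZeta s := by
      linear_combination -hbe
    exact this ▸ hb
  have key : ∀ n : ℕ, ((n : ℂ) + 1 / 2) ^ (-s) = (2:ℂ) ^ s * ((2 * n + 1 : ℕ) : ℂ) ^ (-s) := by
    intro n
    have hc : ((n : ℂ) + 1 / 2) = (((2 * n + 1 : ℕ) : ℝ) : ℂ) * (((1 / 2 : ℝ)) : ℂ) := by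
      push_cast; ring
    rw [hc, mul_cpow_ofReal_nonneg (by positivity) (by norm_num)]
    have h12 : (((1 / 2 : ℝ)) : ℂ) ^ (-s) = (2:ℂ) ^ s := by
      rw [show (((1 / 2 : ℝ)) : ℂ) = (2:ℂ)⁻¹ by norm_num,
        inv_cpow _ _ (by
          rw [show ((2:ℂ)) = ((2:ℝ):ℂ) by norm_num, Complex.arg_ofReal_of_nonneg (by norm_num)]
          exact Real.pi_ne_zero.symm),
        ← cpow_neg, neg_neg]
    rw [h12]
    push_cast
    ring
  have hfin : HasSum (fun n : ℕ => ((n : ℂ) + 1 / 2) ^ (-s))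
      ((2:ℂ) ^ s * (riemannZeta s - (2:ℂ) ^ (-s) * riemannZeta s)) :=
    (hodd.mul_left ((2:ℂ) ^ s)).congr_fun fun n => key n
  have h2 : (2:ℂ) ^ s * (2:ℂ) ^ (-s) = 1 := by
    rw [← cpow_add _ _ two_ne_zero]; simp
  convert hfin using 1
  calc ((2:ℂ) ^ s - 1) * riemannZeta s
      = (2:ℂ) ^ s * riemannZeta s - ((2:ℂ) ^ s * (2:ℂ) ^ (-s)) * riemannZeta s := by
        rw [h2]; ring
    _ = (2:ℂ) ^ s * (riemannZeta s - (2:ℂ) ^ (-s) * riemannZeta s) := by ring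

lemma hasSum_zeta1 (w : ℂ) (hw : 1 < w.re) :
    HasSum (fun k : ℕ => ((k : ℂ) + 1) ^ (-w)) (riemannZeta w) := by
  have h := hasSum_zeta' w hw
  have h0 : ((0:ℕ) : ℂ) ^ (-w) = 0 := by
    rw [Nat.cast_zero]
    exact Complex.zero_cpow (neg_ne_zero.mpr fun h' => by rw [h'] at hw; norm_num at hw)
  have h' : HasSum (fun n : ℕ => ((n : ℂ)) ^ (-w))
      (riemannZeta w + ∑ i ∈ Finset.range 1, ((i : ℂ)) ^ (-w)) := by
    rw [Finset.sum_range_one, h0, add_zero]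
    exact h
  have key := (hasSum_nat_add_iff (f := fun n : ℕ => ((n : ℂ)) ^ (-w)) 1).mpr h'
  refine key.congr_fun fun k => ?_
  push_cast
  rfl

lemma norm_ascPochhammer_le (s : ℂ) (n : ℕ) :
    ‖(ascPochhammer ℂ n).eval s‖ ≤ (ascPochhammer ℝ n).eval ‖s‖ := by
  rw [ascPochhammer_eval_eq_prodC, ascPochhammer_eval_eq_prodR, norm_prod]
  refine Finset.prod_le_prod (fun i _ => norm_nonneg _) (fun i _ => ?_)
  refine (norm_add_le _ _).trans ?_
  simp

lemma ascPochhammerR_nonneg {r : ℝ} (hr : 0 ≤ r) (n : ℕ) :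
    0 ≤ (ascPochhammer ℝ n).eval r := by
  rw [ascPochhammer_eval_eq_prodR]
  exact Finset.prod_nonneg fun i _ => by positivity

lemma ascPochhammer_castRC (r : ℝ) (n : ℕ) :
    (ascPochhammer ℂ n).eval ((r : ℂ)) = (((ascPochhammer ℝ n).eval r : ℝ) : ℂ) := by
  induction n with
  | zero => simp
  | succ n ih => rw [ascPochhammer_succ_eval, ascPochhammer_succ_eval, ih]; push_cast; ring

lemma summable_Q (s : ℂ) :
    Summable (fun n : ℕ => (ascPochhammer ℝ n).eval ‖s‖ / n.factorial * (1/2 : ℝ) ^ n) := by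
  have hz : ‖(1/2 : ℂ)‖ < 1 := by
    rw [norm_div, norm_one, Complex.norm_ofNat]; norm_num
  have h := (hasSum_binomial_s17 ((‖s‖ : ℝ) : ℂ) (1/2) hz).summable
  rw [← Complex.summable_ofReal]
  refine h.congr fun n => ?_
  rw [ascPochhammer_castRC]
  push_cast
  ring

lemma part2 (s : ℂ) (hs : 1 < s.re) :
    ∑' n : ℕ, ((-1) ^ (n + 1) / ((n + 1).factorial : ℂ)) * (-(1 / 2 : ℂ)) ^ (n + 1) *
        (∏ i ∈ Finset.range (n + 1), (s + i)) * riemannZeta (s + (n + 1)) =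
      ((2 : ℂ) ^ s - 2) * riemannZeta s := by
  have hsm : ∀ m : ℕ, 1 < (s + m).re := fun m => by
    simp only [Complex.add_re, Complex.natCast_re]
    have : (0:ℝ) ≤ m := Nat.cast_nonneg m
    linarith
  set G : ℕ × ℕ → ℂ := fun p =>
    (ascPochhammer ℂ p.2).eval s / (p.2.factorial : ℂ) *
      ((2 * ((p.1 : ℂ) + 1))⁻¹) ^ p.2 * ((p.1 : ℂ) + 1) ^ (-s) with hG
  set A : ℕ → ℂ := fun m =>
    (ascPochhammer ℂ m).eval s / (m.factorial : ℂ) * (1/2 : ℂ) ^ m * riemannZeta (s + m)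
    with hA
  -- fiberwise over k (first coordinate): sum over m
  have hk : ∀ k : ℕ, HasSum (fun m => G (k, m)) (((k : ℂ) + 1/2) ^ (-s)) := by
    intro k
    have hn2 : ‖2 * ((k : ℂ) + 1)‖ = 2 * ((k:ℝ) + 1) := by
      rw [show (2 * ((k : ℂ) + 1)) = (((2 * ((k:ℝ)+1) : ℝ)) : ℂ) by push_cast; ring,
        Complex.norm_real, Real.norm_eq_abs, _root_.abs_of_nonneg (by positivity)]
    have hzk : ‖(2 * ((k : ℂ) + 1))⁻¹‖ < 1 := by
      rw [norm_inv, hn2]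
      rw [inv_lt_one_iff₀]
      right
      have : (0:ℝ) ≤ (k:ℝ) := Nat.cast_nonneg k
      linarith
    have hb := (hasSum_binomial_s17 s _ hzk).mul_right (((k : ℂ) + 1) ^ (-s))
    have hval : ((1 : ℂ) - (2 * ((k : ℂ) + 1))⁻¹) ^ (-s) * ((k : ℂ) + 1) ^ (-s)
        = ((k : ℂ) + 1/2) ^ (-s) := by
      have ha : (0:ℝ) ≤ (k : ℝ) + 1 := by positivity
      have hbb : (0:ℝ) ≤ 1 - (2 * ((k:ℝ) + 1))⁻¹ := by
        rw [sub_nonneg, inv_le_one_iff₀]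
        right
        have : (0:ℝ) ≤ (k:ℝ) := Nat.cast_nonneg k
        linarith
      have key := mul_cpow_ofReal_nonneg ha hbb (-s)
      have hkne : ((k:ℝ) + 1) ≠ 0 := by positivity
      have e1 : ((((k:ℝ) + 1) : ℝ) : ℂ) * (((1 - (2 * ((k:ℝ) + 1))⁻¹ : ℝ)) : ℂ)
          = ((k : ℂ) + 1/2) := by
        push_cast
        have hne : ((k : ℂ) + 1) ≠ 0 := by
          exact_mod_cast (Complex.ofReal_ne_zero.mpr hkne : (((k:ℝ)+1 : ℝ) : ℂ) ≠ 0)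
        field_simp
        ring
      have e2 : (((1 - (2 * ((k:ℝ) + 1))⁻¹ : ℝ)) : ℂ) = (1 : ℂ) - (2 * ((k : ℂ) + 1))⁻¹ := by
        push_cast
        ring
      have e3 : ((((k:ℝ) + 1) : ℝ) : ℂ) = ((k : ℂ) + 1) := by push_cast; ring
      rw [e1, e2, e3] at key
      linear_combination -key
    rw [hval] at hb
    exact hb
  -- fiberwise over m (second coordinate): sum over k
  have hm : ∀ m : ℕ, HasSum (fun k => G (k, m)) (A m) := by
    intro m
    have hz := (hasSum_zeta1 (s + m) (hsm m)).mul_left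
      ((ascPochhammer ℂ m).eval s / (m.factorial : ℂ) * (1/2 : ℂ) ^ m)
    refine hz.congr_fun fun k => ?_
    have hne : ((k : ℂ) + 1) ≠ 0 := by
      have : (((k:ℝ) + 1 : ℝ) : ℂ) ≠ 0 := Complex.ofReal_ne_zero.mpr (by positivity)
      simpa using this
    have e : ((k : ℂ) + 1) ^ (-(s + m))
        = (((k : ℂ) + 1)⁻¹) ^ m * ((k : ℂ) + 1) ^ (-s) := by
      have em : ((k : ℂ) + 1) ^ (-(m:ℂ)) = (((k : ℂ) + 1)⁻¹) ^ m := by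
        rw [cpow_neg, cpow_natCast, inv_pow]
      rw [show -(s + (m:ℂ)) = -(m:ℂ) + -s by ring, cpow_add _ _ hne, em]
    rw [e]
    simp only [hG]
    rw [mul_inv]
    ring
  -- summability on the product
  set Q : ℕ → ℝ := fun m => (ascPochhammer ℝ m).eval ‖s‖ / m.factorial * (1/2 : ℝ) ^ m
    with hQ
  have hQs : Summable Q := summable_Q s
  have hnorm : ∀ k m : ℕ, ‖G (k, m)‖ ≤ Q m * ((k:ℝ) + 1) ^ (-s.re) := by
    intro k m
    have n1 : ‖(2 * ((k : ℂ) + 1))⁻¹‖ = (2 * ((k:ℝ) + 1))⁻¹ := by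
      rw [norm_inv, show (2 * ((k : ℂ) + 1)) = (((2 * ((k:ℝ)+1) : ℝ)) : ℂ) by push_cast; ring,
        Complex.norm_real, Real.norm_eq_abs, _root_.abs_of_nonneg (by positivity)]
    have n2 : ‖((k : ℂ) + 1) ^ (-s)‖ = ((k:ℝ) + 1) ^ (-s.re) := by
      rw [show ((k : ℂ) + 1) = ((((k:ℝ) + 1) : ℝ) : ℂ) by push_cast; ring,
        norm_cpow_eq_rpow_re_of_pos (by positivity), neg_re]
    have hmain : ‖G (k, m)‖
        = ‖(ascPochhammer ℂ m).eval s‖ / m.factorial * ((2 * ((k:ℝ) + 1))⁻¹) ^ m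
            * ((k:ℝ) + 1) ^ (-s.re) := by
      rw [hG]
      simp only
      rw [norm_mul, norm_mul, norm_div, Complex.norm_natCast, norm_pow, n1, n2]
    rw [hmain, hQ]
    have hk0 : (0:ℝ) ≤ (k:ℝ) := Nat.cast_nonneg k
    simp only
    apply mul_le_mul_of_nonneg_right ?_ (Real.rpow_nonneg (by positivity) _)
    apply mul_le_mul ?_ ?_ (by positivity) ?_
    · have hf : (0:ℝ) < m.factorial := by positivity
      exact div_le_div_of_nonneg_right (norm_ascPochhammer_le s m) hf.le
    · refine pow_le_pow_left₀ (by positivity) ?_ m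
      rw [show (1/2 : ℝ) = (2:ℝ)⁻¹ by norm_num]
      apply inv_anti₀ (by norm_num)
      linarith
    · exact div_nonneg (ascPochhammerR_nonneg (norm_nonneg s) m) (by positivity)
  have hsum1 : ∀ k : ℕ, Summable (fun m => ‖G (k, m)‖) := fun k =>
    Summable.of_nonneg_of_le (fun m => norm_nonneg _) (fun m => hnorm k m)
      (hQs.mul_right (((k:ℝ) + 1) ^ (-s.re)))
  have hp1 : Summable (fun k : ℕ => ((k:ℝ) + 1) ^ (-s.re)) := by
    have hp : Summable (fun n : ℕ => 1 / (n:ℝ) ^ (s.re)) :=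
      Real.summable_one_div_nat_rpow.mpr hs
    have := (summable_nat_add_iff (f := fun n : ℕ => 1 / (n:ℝ) ^ (s.re)) 1).mpr hp
    refine this.congr fun k => ?_
    rw [Real.rpow_neg (by positivity), ← one_div]
    push_cast
    ring_nf
  have hsum2 : Summable (fun k : ℕ => ∑' m, ‖G (k, m)‖) := by
    refine Summable.of_nonneg_of_le (fun k => tsum_nonneg fun m => norm_nonneg _)
      (fun k => ?_) (hp1.mul_left (∑' m, Q m))
    calc ∑' m, ‖G (k, m)‖ ≤ ∑' m, Q m * ((k:ℝ) + 1) ^ (-s.re) :=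
          Summable.tsum_le_tsum (fun m => hnorm k m) (hsum1 k)
            (hQs.mul_right (((k:ℝ) + 1) ^ (-s.re)))
      _ = (∑' m, Q m) * ((k:ℝ) + 1) ^ (-s.re) := tsum_mul_right
  have hGsum : Summable G := by
    refine Summable.of_norm ?_
    exact (summable_prod_of_nonneg (f := fun p : ℕ × ℕ => ‖G p‖)
      (fun p => norm_nonneg _)).mpr ⟨fun k => hsum1 k, hsum2⟩
  obtain ⟨SG, hGS⟩ := hGsum
  have h1 : HasSum (fun k : ℕ => ((k:ℂ) + 1/2) ^ (-s)) SG := hGS.prod_fiberwise hk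
  have hSG : SG = ((2:ℂ) ^ s - 1) * riemannZeta s := by
    have := hasSum_half s hs
    exact h1.unique (this.congr_fun fun n => by norm_num)
  have hswap : HasSum (fun p : ℕ × ℕ => G p.swap) SG := by
    have := ((Equiv.prodComm ℕ ℕ).hasSum_iff (f := G) (a := SG)).mpr hGS
    exact this.congr_fun fun p => rfl
  have hAsum : HasSum A SG := hswap.prod_fiberwise hm
  have hA0 : A 0 = riemannZeta s := by
    rw [hA]
    simp
  have hshift := Summable.tsum_eq_zero_add hAsum.summable
  have hfin : ∑' n : ℕ, A (n + 1) = ((2:ℂ) ^ s - 2) * riemannZeta s := by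
    rw [hAsum.tsum_eq, hSG, hA0] at hshift
    linear_combination -hshift
  rw [← hfin]
  refine tsum_congr fun n => ?_
  rw [hA]
  simp only
  rw [← ascPochhammer_eval_eq_prodC]
  have h1 : (-(1/2 : ℂ)) ^ (n+1) = (-1 : ℂ) ^ (n+1) * (1/2 : ℂ) ^ (n+1) := by
    rw [← mul_pow]; norm_num
  have h2 : ((-1 : ℂ)) ^ (n+1) * (-1 : ℂ) ^ (n+1) = 1 := by
    rw [← mul_pow]; norm_num
  have h3 : (s + ((n : ℂ) + 1)) = s + (((n+1 : ℕ) : ℂ)) := by push_cast; ring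
  rw [h1, h3]
  linear_combination ((1/2 : ℂ) ^ (n+1) * (ascPochhammer ℂ (n+1)).eval s
    * riemannZeta (s + (((n+1 : ℕ) : ℂ))) / (((n+1).factorial : ℕ) : ℂ)) * h2

/-- For `Re s > 1`, `ζ(s, 1/2) = (2^s − 1) ζ(s)`, and consequently substituting
`α = −1/2` in the power series of `ζ_1(s, α)` yields
`∑_{n≥1} ((-1)^n/n!)(−1/2)^n s(s+1)⋯(s+n-1) ζ(s+n) = (2^s − 2) ζ(s)`. -/
theorem hurwitzZeta_half (s : ℂ) (hs : 1 < s.re) :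
    (∑' n : ℕ, ((n : ℂ) + 1 / 2) ^ (-s)) = ((2 : ℂ) ^ s - 1) * riemannZeta s ∧
      ∑' n : ℕ, ((-1) ^ (n + 1) / ((n + 1).factorial : ℂ)) * (-(1 / 2 : ℂ)) ^ (n + 1) *
          (∏ i ∈ Finset.range (n + 1), (s + i)) * riemannZeta (s + (n + 1)) =
        ((2 : ℂ) ^ s - 2) * riemannZeta s :=
  ⟨(hasSum_half s hs).tsum_eq, part2 s hs⟩
end

section
/- For every integer r ≥ 0 and every complex s with Re(s) > 1, the r-th partial derivative in s of ζ_1(s, α) = ∑_{n≥1} (n+α)^{-s} is, for |α| < 1, given by term-by-term differentiation of the power series in α: ∂^r/∂s^r ζ_1(s, α) = ζ^{(r)}(s) + ∑_{n≥1} ((-α)^n/n!) · (d^r/ds^r)[s(s+1)⋯(s+n-1) ζ(s+n)]. -/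
open Complex Finset Filter Topology


open Complex Finset

private lemma slit_aux {w : ℂ} (hw : ‖w‖ < 1) : (1 + w) ∈ Complex.slitPlane := by
  have h1 : |w.re| ≤ ‖w‖ := by simpa using Complex.abs_re_le_norm w
  have := abs_le.mp h1
  left
  simp only [Complex.add_re, Complex.one_re]
  linarith [this.1]

private lemma diffOn_one_add_cpow (c : ℂ) {R : ℝ} (hR : R < 1) :
    DifferentiableOn ℂ (fun w : ℂ => (1 + w) ^ c) (Metric.closedBall 0 R) := by
  intro x hx
  have hx' : ‖x‖ ≤ R := by simpa using hx
  have h1 : (1 + x) ∈ Complex.slitPlane := slit_aux (lt_of_le_of_lt hx' hR)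
  exact (((hasDerivAt_id x).const_add 1).cpow_const h1).differentiableAt.differentiableWithinAt

private lemma iteratedDeriv_one_add_cpow (c : ℂ) (n : ℕ) :
    ∀ w ∈ Metric.ball (0:ℂ) 1, iteratedDeriv n (fun w : ℂ => (1 + w) ^ c) w
      = (∏ i ∈ range n, (c - i)) * (1 + w) ^ (c - n) := by
  induction n with
  | zero => intro w hw; simp
  | succ n ih =>
    intro w hw
    have hw1 : ‖w‖ < 1 := by simpa using hw
    rw [iteratedDeriv_succ]
    have hev : iteratedDeriv n (fun w : ℂ => (1 + w) ^ c) =ᶠ[nhds w]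
        fun x => (∏ i ∈ range n, (c - i)) * (1 + x) ^ (c - n) := by
      filter_upwards [Metric.isOpen_ball.mem_nhds hw] with x hx using ih x hx
    rw [hev.deriv_eq]
    have hd : HasDerivAt (fun x : ℂ => (1 + x) ^ (c - n))
        ((c - n) * (1 + w) ^ (c - n - 1) * 1) w :=
      ((hasDerivAt_id w).const_add 1).cpow_const (slit_aux hw1)
    rw [deriv_const_mul _ hd.differentiableAt, hd.deriv]
    rw [prod_range_succ]
    have : c - (n:ℂ) - 1 = c - ((n:ℕ)+1 : ℕ) := by push_cast; ring
    rw [← this]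
    ring

private lemma hasSum_binomial_s18 (c w : ℂ) (hw : ‖w‖ < 1) :
    HasSum (fun k : ℕ => (∏ i ∈ range k, (c - i)) / (k.factorial : ℂ) * w ^ k) ((1 + w) ^ c) := by
  set r : ℝ := (1 + ‖w‖) / 2 with hr
  have hr0 : 0 < r := by positivity
  have hwr : ‖w‖ < r := by rw [hr]; linarith
  have hr1 : r < 1 := by rw [hr]; linarith
  set R : NNReal := r.toNNReal with hR
  have hR0 : 0 < R := Real.toNNReal_pos.mpr hr0
  have hRr : (R : ℝ) = r := Real.coe_toNNReal _ hr0.le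
  have hd := (diffOn_one_add_cpow c (R := (R:ℝ)) (by rw [hRr]; exact hr1)).hasFPowerSeriesOnBall
    (c := 0) hR0
  have hy : w ∈ Metric.eball (0:ℂ) R := by
    rw [Metric.mem_eball, edist_zero_right, enorm_eq_nnnorm]
    exact_mod_cast (by rw [hRr]; exact hwr : (‖w‖₊ : ℝ) < (R:ℝ))
  have hsum := hd.hasSum_iteratedFDeriv hy
  rw [zero_add] at hsum
  refine hsum.congr_fun fun k => ?_
  have h1 : (iteratedFDeriv ℂ k (fun w : ℂ => (1 + w) ^ c) 0 : (Fin k → ℂ) → ℂ) (fun _ => w)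
      = (∏ _i : Fin k, w) • iteratedDeriv k (fun w : ℂ => (1 + w) ^ c) 0 :=
    iteratedFDeriv_apply_eq_iteratedDeriv_mul_prod
  have h2 := iteratedDeriv_one_add_cpow c k 0 (by simp)
  rw [h1, h2]
  simp only [smul_eq_mul, prod_const, card_univ, Fintype.card_fin, add_zero, Complex.one_cpow]
  field_simp

private noncomputable def bcoef' (α z : ℂ) (k : ℕ) : ℂ :=
  (-α) ^ k / (k.factorial : ℂ) * ∏ i ∈ range k, (z + i)


private lemma mul_cpow_pos_real {r : ℝ} (hr : 0 < r) {x : ℂ} (hx : x ≠ 0) (c : ℂ) :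
    ((r : ℂ) * x) ^ c = (r : ℂ) ^ c * x ^ c := by
  have hr' : (r : ℂ) ≠ 0 := Complex.ofReal_ne_zero.mpr hr.ne'
  rw [Complex.cpow_def_of_ne_zero (mul_ne_zero hr' hx), Complex.cpow_def_of_ne_zero hr',
    Complex.cpow_def_of_ne_zero hx, ← Complex.exp_add, Complex.log_ofReal_mul hr hx, add_mul]
  rw [Complex.ofReal_log hr.le]


private lemma hasSum_row (α z : ℂ) (hα : ‖α‖ < 1) (m : ℕ) :
    HasSum (fun k : ℕ => bcoef' α z k * ((m : ℂ) + 1) ^ (-(z + k)))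
      (((m : ℂ) + 1 + α) ^ (-z)) := by
  have hm0 : (0:ℝ) < (m : ℝ) + 1 := by positivity
  have hmc : ((m : ℂ) + 1) ≠ 0 := by
    exact_mod_cast (show (((m:ℝ) + 1 : ℝ) : ℂ) ≠ 0 from Complex.ofReal_ne_zero.mpr hm0.ne')
  set w : ℂ := α / ((m : ℂ) + 1) with hw
  have hnw : ‖w‖ < 1 := by
    rw [hw, norm_div]
    have h1 : (1:ℝ) ≤ ‖(m : ℂ) + 1‖ := by
      have : ((m : ℂ) + 1) = (((m:ℝ)+1 : ℝ) : ℂ) := by push_cast; ring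
      rw [this, Complex.norm_real, Real.norm_eq_abs, abs_of_pos hm0]
      simp
    calc ‖α‖ / ‖(m : ℂ) + 1‖ ≤ ‖α‖ := div_le_self (norm_nonneg _) h1
      _ < 1 := hα
  have hb := (hasSum_binomial_s18 (-z) w hnw).mul_left (((m : ℂ) + 1) ^ (-z))
  have h1w : (1 : ℂ) + w ≠ 0 := Complex.slitPlane_ne_zero (by
    have := Complex.abs_re_le_norm w
    left; simp only [Complex.add_re, Complex.one_re]
    have h2 := abs_le.mp (by simpa using Complex.abs_re_le_norm w)
    have h3 : ‖w‖ < 1 := hnw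
    linarith [h2.1])
  have hsplit : ((m : ℂ) + 1 + α) ^ (-z) = ((m : ℂ) + 1) ^ (-z) * (1 + w) ^ (-z) := by
    have : (m : ℂ) + 1 + α = (((m:ℝ) + 1 : ℝ) : ℂ) * (1 + w) := by
      push_cast
      rw [hw]; field_simp
    rw [this, mul_cpow_pos_real hm0 h1w]
    norm_num
  rw [hsplit]
  refine hb.congr_fun fun k => ?_
  have hprod : ∏ i ∈ range k, (-z - i) = (-1) ^ k * ∏ i ∈ range k, (z + i) := by
    rw [show ((-1:ℂ)) ^ k = ∏ _i ∈ range k, (-1:ℂ) by simp, ← prod_mul_distrib]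
    exact prod_congr rfl fun i _ => by ring
  have hcpow : ((m : ℂ) + 1) ^ (-(z + k)) = ((m : ℂ) + 1) ^ (-z) * (((m : ℂ) + 1) ^ k)⁻¹ := by
    rw [show -(z + (k:ℂ)) = -z + -(k:ℂ) by ring, Complex.cpow_add _ _ hmc,
      Complex.cpow_neg _ (k:ℂ), Complex.cpow_natCast]
  rw [hcpow, hprod, hw]
  simp only [bcoef']
  rw [div_pow, neg_pow α]
  field_simp


private lemma summable_maj {t R : ℝ} (ht0 : 0 < t) (ht1 : t < 1) (hR : 1 ≤ R) :
    Summable (fun k : ℕ => t ^ k / (k.factorial : ℝ) * ∏ i ∈ range k, (R + i)) := by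
  set f : ℕ → ℝ := fun k => t ^ k / (k.factorial : ℝ) * ∏ i ∈ range k, (R + i) with hf
  have hppos : ∀ k : ℕ, (0:ℝ) < ∏ i ∈ range k, (R + i) := fun k =>
    prod_pos fun i _ => by have : (0:ℝ) ≤ i := Nat.cast_nonneg i; linarith
  have hfpos : ∀ k, 0 < f k := fun k =>
    mul_pos (div_pos (pow_pos ht0 k) (by exact_mod_cast k.factorial_pos)) (hppos k)
  apply summable_of_ratio_test_tendsto_lt_one ht1
    (Filter.Eventually.of_forall fun k => (hfpos k).ne')
  have hratio : ∀ k : ℕ, ‖f (k+1)‖ / ‖f k‖ = t * ((R - 1) / ((k:ℝ)+1) + 1) := by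
    intro k
    rw [Real.norm_eq_abs, Real.norm_eq_abs, abs_of_pos (hfpos _), abs_of_pos (hfpos _), hf]
    simp only
    rw [prod_range_succ, Nat.factorial_succ, pow_succ]
    have h1 : ((k:ℝ)+1) ≠ 0 := by positivity
    have h2 : (k.factorial : ℝ) ≠ 0 := by exact_mod_cast k.factorial_pos.ne'
    have h3 : t ^ k ≠ 0 := (pow_pos ht0 k).ne'
    have h4 : (∏ i ∈ range k, (R + i)) ≠ 0 := (hppos k).ne'
    push_cast
    field_simp
    ring
  rw [show (fun k:ℕ => ‖f (k+1)‖/‖f k‖) = fun k : ℕ => t * ((R - 1) / ((k:ℝ)+1) + 1)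
    from funext hratio]
  have h0 : Tendsto (fun k : ℕ => (R-1)/((k:ℝ)+1)) atTop (𝓝 0) := by
    have h := (tendsto_const_div_atTop_nhds_zero_nat (R-1)).comp (tendsto_add_atTop_nat 1)
    refine h.congr fun k => ?_
    simp [Function.comp]
  have h5 : Tendsto (fun k : ℕ => t * ((R - 1) / ((k:ℝ)+1) + 1)) atTop (𝓝 (t * (0 + 1))) :=
    (h0.add (tendsto_const_nhds (x := (1:ℝ)))).const_mul t
  norm_num at h5
  exact h5


private lemma bcoef_norm_le (α z : ℂ) (k : ℕ) :
    ‖bcoef' α z k‖ ≤ (max ‖α‖ 2⁻¹) ^ k / (k.factorial : ℝ) * ∏ i ∈ range k, (max ‖z‖ 1 + i) := by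
  rw [bcoef', norm_mul, norm_div, norm_pow, norm_neg]
  have h1 : ‖∏ i ∈ range k, (z + i)‖ ≤ ∏ i ∈ range k, (max ‖z‖ 1 + i) := by
    rw [norm_prod]
    refine prod_le_prod (fun i _ => norm_nonneg _) fun i _ => ?_
    calc ‖z + (i:ℂ)‖ ≤ ‖z‖ + ‖(i:ℂ)‖ := norm_add_le _ _
      _ ≤ max ‖z‖ 1 + i := by
          rw [Complex.norm_natCast]
          exact add_le_add (le_max_left _ _) le_rfl
  have h2 : ‖α‖ ^ k / ‖(k.factorial : ℂ)‖ ≤ (max ‖α‖ 2⁻¹) ^ k / (k.factorial : ℝ) := by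
    rw [Complex.norm_natCast]
    have hkf : (0:ℝ) < (k.factorial : ℝ) := by exact_mod_cast k.factorial_pos
    exact div_le_div_of_nonneg_right (pow_le_pow_left₀ (norm_nonneg _) (le_max_left _ _) k) hkf.le
  exact mul_le_mul h2 h1 (norm_nonneg _) (by positivity)

private lemma summable_shift_rpow {p : ℝ} (hp : 1 < p) :
    Summable (fun n : ℕ => ((n:ℝ)+1) ^ (-p)) := by
  have h := Real.summable_nat_rpow_inv.mpr hp
  have h2 : Summable (fun n : ℕ => ((n:ℝ)) ^ (-p)) := by
    refine h.congr fun n => ?_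
    rw [Real.rpow_neg (Nat.cast_nonneg n)]
  have h3 := (summable_nat_add_iff 1).mpr h2
  refine h3.congr fun n => ?_
  push_cast
  rfl

private lemma zeta_bound : ∃ C : ℝ, 0 ≤ C ∧ ∀ w : ℂ, 2 ≤ w.re → ‖riemannZeta w‖ ≤ C := by
  refine ⟨∑' n : ℕ, ((n:ℝ)+1) ^ (-(2:ℝ)), tsum_nonneg fun n => by positivity, fun w hw => ?_⟩
  have hw1 : 1 < w.re := by linarith
  rw [zeta_eq_tsum_one_div_nat_add_one_cpow hw1]
  have hnorm : ∀ n : ℕ, ‖1 / ((n:ℂ)+1) ^ w‖ = ((n:ℝ)+1) ^ (-w.re) := by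
    intro n
    have hcast : ((n:ℂ)+1) = (((n:ℝ)+1 : ℝ) : ℂ) := by push_cast; ring
    rw [norm_div, norm_one, hcast,
      Complex.norm_cpow_eq_rpow_re_of_pos (by positivity), Real.rpow_neg (by positivity), one_div]
  have hle : ∀ n : ℕ, ((n:ℝ)+1) ^ (-w.re) ≤ ((n:ℝ)+1) ^ (-(2:ℝ)) := fun n =>
    Real.rpow_le_rpow_of_exponent_le (by linarith [Nat.cast_nonneg (α := ℝ) n]) (by linarith)
  have hs1 : Summable (fun n : ℕ => ((n:ℝ)+1) ^ (-w.re)) := summable_shift_rpow hw1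
  have hs2 : Summable (fun n : ℕ => ((n:ℝ)+1) ^ (-(2:ℝ))) := summable_shift_rpow one_lt_two
  calc ‖∑' n : ℕ, 1 / ((n:ℂ)+1) ^ w‖ ≤ ∑' n : ℕ, ‖1 / ((n:ℂ)+1) ^ w‖ :=
        norm_tsum_le_tsum_norm (by simpa only [hnorm] using hs1)
    _ = ∑' n : ℕ, ((n:ℝ)+1) ^ (-w.re) := tsum_congr hnorm
    _ ≤ ∑' n : ℕ, ((n:ℝ)+1) ^ (-(2:ℝ)) := Summable.tsum_le_tsum hle hs1 hs2

private lemma summable_bcoef_norm (α z : ℂ) (hα : ‖α‖ < 1) :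
    Summable (fun k : ℕ => ‖bcoef' α z k‖) := by
  have ht0 : (0:ℝ) < max ‖α‖ 2⁻¹ := lt_max_of_lt_right (by norm_num)
  have ht1 : max ‖α‖ 2⁻¹ < 1 := max_lt hα (by norm_num)
  exact Summable.of_nonneg_of_le (fun k => norm_nonneg _) (bcoef_norm_le α z)
    (summable_maj ht0 ht1 (le_max_right _ _))


set_option maxHeartbeats 1000000 in
private lemma lemmaA (α z : ℂ) (hα : ‖α‖ < 1) (hz : 1 < z.re) :
    ∑' m : ℕ, ((m : ℂ) + 1 + α) ^ (-z)
      = ∑' k : ℕ, bcoef' α z k * riemannZeta (z + k) := by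
  set P : ℕ × ℕ → ℂ := fun p => bcoef' α z p.2 * ((p.1 : ℂ) + 1) ^ (-(z + p.2)) with hP
  have hPnorm : ∀ p : ℕ × ℕ, ‖P p‖
      = ‖bcoef' α z p.2‖ * ((p.1:ℝ)+1) ^ (-(z.re + p.2)) := by
    intro p
    rw [hP, norm_mul]
    congr 1
    have hcast : ((p.1:ℂ)+1) = (((p.1:ℝ)+1 : ℝ) : ℂ) := by push_cast; ring
    rw [hcast, Complex.norm_cpow_eq_rpow_re_of_pos (by positivity)]
    congr 1
  have hbs := summable_bcoef_norm α z hα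
  have hrow_le : ∀ m k : ℕ, ‖P (m, k)‖ ≤ ((m:ℝ)+1) ^ (-z.re) * ‖bcoef' α z k‖ := by
    intro m k
    rw [hPnorm, mul_comm]
    apply mul_le_mul_of_nonneg_right _ (norm_nonneg _)
    apply Real.rpow_le_rpow_of_exponent_le (by linarith [Nat.cast_nonneg (α := ℝ) m])
    simp [Nat.cast_nonneg]
  have hrow_summ : ∀ m : ℕ, Summable (fun k => ‖P (m, k)‖) := fun m =>
    Summable.of_nonneg_of_le (fun k => norm_nonneg _) (hrow_le m) (hbs.mul_left _)
  have houter : Summable (fun m : ℕ => ((m:ℝ)+1) ^ (-z.re)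
      * ∑' k : ℕ, ‖bcoef' α z k‖) := (summable_shift_rpow hz).mul_right _
  have hPsumm : Summable (fun p : ℕ × ℕ => ‖P p‖) := by
    refine (summable_prod_of_nonneg (fun p => norm_nonneg (P p))).mpr ⟨hrow_summ, ?_⟩
    refine Summable.of_nonneg_of_le (fun m => tsum_nonneg fun k => norm_nonneg _)
      (fun m => ?_) houter
    calc ∑' k : ℕ, ‖P (m, k)‖ ≤ ∑' k : ℕ, ((m:ℝ)+1) ^ (-z.re) * ‖bcoef' α z k‖ :=
          Summable.tsum_le_tsum (hrow_le m) (hrow_summ m) (hbs.mul_left _)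
      _ = ((m:ℝ)+1) ^ (-z.re) * ∑' k : ℕ, ‖bcoef' α z k‖ := tsum_mul_left
  have hPsum : Summable P := hPsumm.of_norm
  have hrows : ∀ m : ℕ, HasSum (fun k => P (m, k)) (((m : ℂ) + 1 + α) ^ (-z)) :=
    fun m => hasSum_row α z hα m
  have hswap : ∑' m : ℕ, ∑' k : ℕ, P (m, k) = ∑' k : ℕ, ∑' m : ℕ, P (m, k) :=
    (Summable.tsum_comm (f := fun m k => P (m, k)) hPsum).symm
  have hcol : ∀ k : ℕ, ∑' m : ℕ, P (m, k) = bcoef' α z k * riemannZeta (z + k) := by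
    intro k
    have hzk : 1 < (z + k).re := by
      simp only [Complex.add_re, Complex.natCast_re]
      linarith [Nat.cast_nonneg (α := ℝ) k]
    rw [zeta_eq_tsum_one_div_nat_add_one_cpow hzk, hP]
    simp only
    rw [tsum_mul_left]
    congr 1
    refine tsum_congr fun m => ?_
    rw [Complex.cpow_neg, one_div]
  calc ∑' m : ℕ, ((m : ℂ) + 1 + α) ^ (-z) = ∑' m : ℕ, ∑' k : ℕ, P (m, k) :=
        tsum_congr fun m => ((hrows m).tsum_eq).symm
    _ = ∑' k : ℕ, ∑' m : ℕ, P (m, k) := hswap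
    _ = ∑' k : ℕ, bcoef' α z k * riemannZeta (z + k) := tsum_congr hcol


private lemma derivOn {U : Set ℂ} (hU : IsOpen U) {f : ℂ → ℂ} (hf : DifferentiableOn ℂ f U) :
    DifferentiableOn ℂ (deriv f) U := ((hf.analyticOnNhd hU).deriv).differentiableOn

private lemma iteratedDeriv_diffOn {U : Set ℂ} (hU : IsOpen U) {f : ℂ → ℂ}
    (hf : DifferentiableOn ℂ f U) (r : ℕ) : DifferentiableOn ℂ (iteratedDeriv r f) U := by
  induction r with
  | zero => simpa using hf
  | succ r ih => rw [iteratedDeriv_succ]; exact derivOn hU ih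

private lemma key_tlu {f : ℕ → ℂ → ℂ} {g : ℂ → ℂ} {U : Set ℂ} (hU : IsOpen U)
    (hf : ∀ n, DifferentiableOn ℂ (f n) U)
    (h : TendstoLocallyUniformlyOn (fun (t : Finset ℕ) z => ∑ n ∈ t, f n z) g atTop U) (r : ℕ) :
    TendstoLocallyUniformlyOn (fun (t : Finset ℕ) z => ∑ n ∈ t, iteratedDeriv r (f n) z)
      (iteratedDeriv r g) atTop U := by
  induction r with
  | zero => simpa using h
  | succ r ih =>
    have hdiff : ∀ n, DifferentiableOn ℂ (iteratedDeriv r (f n)) U := fun n =>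
      iteratedDeriv_diffOn hU (hf n) r
    have h1 := ih.deriv
      (Filter.Eventually.of_forall fun t => DifferentiableOn.fun_sum fun n _ => hdiff n) hU
    rw [iteratedDeriv_succ]
    simp only [iteratedDeriv_succ]
    refine h1.congr fun t z hz => ?_
    simp only [Function.comp]
    exact deriv_fun_sum fun n _ => (hdiff n).differentiableAt (hU.mem_nhds hz)

private lemma iteratedDeriv_const_mul_of_diffOn {U : Set ℂ} (hU : IsOpen U) {G : ℂ → ℂ}
    (hG : DifferentiableOn ℂ G U) (C : ℂ) (r : ℕ) :
    ∀ z ∈ U, iteratedDeriv r (fun w => C * G w) z = C * iteratedDeriv r G z := by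
  induction r with
  | zero => intro z hz; simp
  | succ r ih =>
    intro z hz
    rw [iteratedDeriv_succ, iteratedDeriv_succ]
    have hev : iteratedDeriv r (fun w => C * G w) =ᶠ[𝓝 z]
        fun w => C * iteratedDeriv r G w := by
      filter_upwards [hU.mem_nhds hz] with x hx using ih x hx
    rw [hev.deriv_eq,
      deriv_const_mul C ((iteratedDeriv_diffOn hU hG r).differentiableAt (hU.mem_nhds hz))]

/-- For every `r ≥ 0`, `Re s > 1` and `|α| < 1`, the `r`-th `s`-derivative of
`ζ_1(s, α) = ∑_{n≥1} (n+α)^{-s}` is given by term-by-term `s`-differentiation of its power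
series in `α`:
`∂^r/∂s^r ζ_1(s, α) = ζ^{(r)}(s) + ∑_{n≥1} ((-α)^n/n!) (d^r/ds^r)[s(s+1)⋯(s+n-1) ζ(s+n)]`. -/
theorem iteratedDeriv_hurwitz_series (r : ℕ) (s : ℂ) (hs : 1 < s.re) (α : ℂ) (hα : ‖α‖ < 1) :
    iteratedDeriv r (fun z : ℂ => ∑' n : ℕ, ((n : ℂ) + 1 + α) ^ (-z)) s =
      iteratedDeriv r riemannZeta s +
        ∑' n : ℕ, ((-α) ^ (n + 1) / ((n + 1).factorial : ℂ)) *
          iteratedDeriv r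
            (fun z : ℂ => (∏ i ∈ Finset.range (n + 1), (z + i)) * riemannZeta (z + (n + 1)))
            s := by
  set U : Set ℂ := {z : ℂ | 1 < z.re} with hU
  have hUopen : IsOpen U := isOpen_lt continuous_const Complex.continuous_re
  have hne1 : ∀ z ∈ U, ∀ k : ℕ, z + (k:ℂ) ≠ 1 := by
    intro z hz k h
    have h2 := congrArg Complex.re h
    simp only [Complex.add_re, Complex.natCast_re, Complex.one_re] at h2
    have hz' : 1 < z.re := hz
    have : (0:ℝ) ≤ (k:ℝ) := Nat.cast_nonneg k
    linarith
  set famF : ℕ → ℂ → ℂ := fun k z => bcoef' α z k * riemannZeta (z + k) with hfamF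
  have hfamdiff : ∀ k, DifferentiableOn ℂ (famF k) U := by
    intro k z hz
    have hb : DifferentiableAt ℂ (fun z : ℂ => bcoef' α z k) z := by
      simp only [bcoef']
      exact (differentiableAt_const _).mul
        (DifferentiableAt.fun_finsetProd fun i _ => differentiableAt_id.add_const _)
    have hζ : DifferentiableAt ℂ (fun z : ℂ => riemannZeta (z + k)) z :=
      (differentiableAt_riemannZeta (by
        have h0 := hne1 z hz k
        simpa using h0)).comp z (differentiableAt_id.add_const _)
    exact (hb.mul hζ).differentiableWithinAt
  have hTLU : TendstoLocallyUniformlyOn (fun (t : Finset ℕ) z => ∑ k ∈ t, famF k z)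
      (fun z => ∑' k, famF k z) atTop U := by
    rw [tendstoLocallyUniformlyOn_iff_forall_isCompact hUopen]
    intro K hKU hK
    obtain ⟨C, hC0, hCz⟩ := zeta_bound
    obtain ⟨R0, hR0⟩ := hK.exists_bound_of_continuousOn (continuousOn_id (s := K))
    obtain ⟨C0, hC0'⟩ := hK.exists_bound_of_continuousOn (fun z hz =>
      (differentiableAt_riemannZeta (by simpa using hne1 z (hKU hz) 0)).continuousAt.continuousWithinAt)
    set t : ℝ := max ‖α‖ 2⁻¹ with ht
    have ht0 : (0:ℝ) < t := lt_max_of_lt_right (by norm_num)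
    have ht1 : t < 1 := max_lt hα (by norm_num)
    set R : ℝ := max R0 1 with hR
    have hR1 : (1:ℝ) ≤ R := le_max_right _ _
    set CC : ℝ := max (max C0 C) 1 with hCC
    have hCC0 : (0:ℝ) < CC := lt_max_of_lt_right one_pos
    have hu : Summable (fun k : ℕ => CC * (t ^ k / (k.factorial : ℝ) * ∏ i ∈ range k, (R + i))) :=
      (summable_maj ht0 ht1 hR1).mul_left CC
    apply tendstoUniformlyOn_tsum hu
    intro k z hz
    have hzU : z ∈ U := hKU hz
    have h1 : ‖bcoef' α z k‖ ≤ t ^ k / (k.factorial : ℝ) * ∏ i ∈ range k, (R + i) := by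
      refine (bcoef_norm_le α z k).trans ?_
      refine mul_le_mul_of_nonneg_left ?_ (by positivity)
      refine prod_le_prod (fun i _ => by positivity) fun i _ => ?_
      refine add_le_add ?_ le_rfl
      refine max_le ?_ hR1
      calc ‖z‖ = ‖id z‖ := rfl
        _ ≤ R0 := hR0 z hz
        _ ≤ R := le_max_left _ _
    have h2 : ‖riemannZeta (z + k)‖ ≤ CC := by
      rcases Nat.eq_zero_or_pos k with hk | hk
      · subst hk
        calc ‖riemannZeta (z + (0:ℕ))‖ = ‖riemannZeta z‖ := by norm_num
          _ ≤ C0 := hC0' z hz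
          _ ≤ CC := le_trans (le_max_left _ _) (le_max_left _ _)
      · refine (hCz _ ?_).trans (le_trans (le_max_right _ _) (le_max_left _ _))
        simp only [Complex.add_re, Complex.natCast_re]
        have hz1 : 1 < z.re := hzU
        have : (1:ℝ) ≤ (k:ℝ) := by exact_mod_cast hk
        linarith
    calc ‖famF k z‖ = ‖bcoef' α z k‖ * ‖riemannZeta (z + k)‖ := norm_mul _ _
      _ ≤ (t ^ k / (k.factorial : ℝ) * ∏ i ∈ range k, (R + i)) * CC :=
          mul_le_mul h1 h2 (norm_nonneg _) (by positivity)
      _ = CC * (t ^ k / (k.factorial : ℝ) * ∏ i ∈ range k, (R + i)) := mul_comm _ _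
  have hsU : s ∈ U := hs
  have hg_eq : (fun z : ℂ => ∑' n : ℕ, ((n:ℂ)+1+α) ^ (-z)) =ᶠ[𝓝 s]
      fun z => ∑' k, famF k z := by
    filter_upwards [hUopen.mem_nhds hsU] with z hz using lemmaA α z hα hz
  rw [hg_eq.iteratedDeriv_eq r]
  have hkey := key_tlu hUopen hfamdiff hTLU r
  have hhs : HasSum (fun k => iteratedDeriv r (famF k) s)
      (iteratedDeriv r (fun z => ∑' k, famF k z) s) := hkey.tendsto_at hsU
  rw [← hhs.tsum_eq, Summable.tsum_eq_zero_add hhs.summable]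
  congr 1
  · have h0 : famF 0 = riemannZeta := by
      funext z
      simp [hfamF, bcoef']
    rw [h0]
  · refine tsum_congr fun n => ?_
    have hGdiff : DifferentiableOn ℂ
        (fun z : ℂ => (∏ i ∈ Finset.range (n + 1), (z + i)) * riemannZeta (z + (n + 1))) U := by
      intro z hz
      have hp : DifferentiableAt ℂ (fun z : ℂ => ∏ i ∈ Finset.range (n + 1), (z + (i:ℂ))) z :=
        DifferentiableAt.fun_finsetProd fun i _ => differentiableAt_id.add_const _
      have hζ : DifferentiableAt ℂ (fun z : ℂ => riemannZeta (z + ((n:ℂ) + 1))) z :=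
        (differentiableAt_riemannZeta (by
          have h0 := hne1 z hz (n+1)
          push_cast at h0
          simpa using h0)).comp z (differentiableAt_id.add_const _)
      exact (hp.mul hζ).differentiableWithinAt
    have heq : famF (n+1) = fun z : ℂ => ((-α) ^ (n + 1) / ((n + 1).factorial : ℂ)) *
        ((∏ i ∈ Finset.range (n + 1), (z + i)) * riemannZeta (z + (n + 1))) := by
      funext z
      simp only [hfamF, bcoef']
      push_cast
      ring
    rw [heq]
    exact iteratedDeriv_const_mul_of_diffOn hUopen hGdiff _ r s hsU
end

section
/- For real β with 0 ≤ β < 1 and complex s, the bound ∑_{i≥0} |s(s+1)⋯(s+i-1)|/i! · β^i ≤ (1−β)^{-|s|} holds, where the left side is the series of absolute values of binomial coefficients |(-s choose i)| β^i. -/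
open Complex Finset


lemma rising_partial_le (N : ℕ) : ∀ a : ℝ, 0 ≤ a → ∀ x : ℝ, 0 ≤ x → x < 1 →
    ∑ i ∈ range N, (∏ j ∈ range i, (a + j)) / (i.factorial : ℝ) * x ^ i ≤ (1 - x) ^ (-a) := by
  induction N with
  | zero =>
    intro a ha x hx0 hx1
    simp only [range_zero, sum_empty]
    exact Real.rpow_nonneg (by linarith) _
  | succ N ih =>
    intro a ha x hx0 hx1
    set c : ℕ → ℝ := fun i => (∏ j ∈ range i, (a + j)) / (i.factorial : ℝ) with hc
    set F : ℝ → ℝ := fun y => (1 - y) ^ (-a) - ∑ i ∈ range (N + 1), c i * y ^ i with hF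
    have key : ∀ y : ℝ, y < 1 → HasDerivAt F
        (a * ((1 - y) ^ (-(a + 1)) -
          ∑ i ∈ range N, (∏ j ∈ range i, ((a + 1) + j)) / (i.factorial : ℝ) * y ^ i)) y := by
      intro y hy
      have h1 : HasDerivAt (fun z : ℝ => (1 - z) ^ (-a)) (a * (1 - y) ^ (-(a + 1))) y := by
        have hg : HasDerivAt (fun z : ℝ => 1 - z) (-1) y := by
          simpa using (hasDerivAt_id y).const_sub 1
        have hr := (Real.hasDerivAt_rpow_const (x := 1 - y) (p := -a)
          (Or.inl (by linarith))).comp y hg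
        refine hr.congr_deriv ?_
        ring_nf
      have h2 : HasDerivAt (fun z : ℝ => ∑ i ∈ range (N + 1), c i * z ^ i)
          (∑ i ∈ range (N + 1), c i * (i * y ^ (i - 1))) y :=
        HasDerivAt.fun_sum fun i _ => (hasDerivAt_pow i y).const_mul (c i)
      have hsum : ∑ i ∈ range (N + 1), c i * (i * y ^ (i - 1)) =
          a * ∑ i ∈ range N, (∏ j ∈ range i, ((a + 1) + j)) / (i.factorial : ℝ) * y ^ i := by
        rw [Finset.sum_range_succ']
        simp only [Nat.cast_zero, zero_mul, mul_zero, add_zero]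
        rw [Finset.mul_sum]
        refine Finset.sum_congr rfl fun i _ => ?_
        have hprod : ∏ j ∈ range (i + 1), (a + (j : ℝ)) =
            a * ∏ j ∈ range i, ((a + 1) + (j : ℝ)) := by
          rw [Finset.prod_range_succ']
          have h0 : (a + ((0:ℕ):ℝ)) = a := by simp
          rw [h0, mul_comm]
          congr 1
          refine Finset.prod_congr rfl fun j _ => ?_
          push_cast; ring
        have hfac : ((i + 1).factorial : ℝ) = (i + 1) * (i.factorial : ℝ) := by
          rw [Nat.factorial_succ]; push_cast; ring
        simp only [hc, hprod, hfac]
        have hi : ((i : ℝ) + 1) ≠ 0 := by positivity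
        have hf : (i.factorial : ℝ) ≠ 0 := Nat.cast_ne_zero.mpr i.factorial_ne_zero
        push_cast
        field_simp
      have := h1.sub h2
      rw [hsum] at this
      refine this.congr_deriv ?_
      ring
    have hF0 : F 0 = 0 := by
      simp only [hF, sub_zero, Real.one_rpow]
      rw [Finset.sum_eq_single 0]
      · simp [hc]
      · intro i _ hi
        simp [zero_pow hi]
      · simp
    have hmono : MonotoneOn F (Set.Icc 0 x) := by
      rcases eq_or_lt_of_le hx0 with h | h
      · intro u hu v hv _
        rw [← h, Set.Icc_self] at hu hv
        simp_all
      refine monotoneOn_of_deriv_nonneg (convex_Icc 0 x) ?_ ?_ ?_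
      · intro y hy
        exact ((key y (lt_of_le_of_lt hy.2 hx1)).continuousAt).continuousWithinAt
      · intro y hy
        rw [interior_Icc] at hy
        exact ((key y (lt_trans hy.2 hx1)).differentiableAt).differentiableWithinAt
      · intro y hy
        rw [interior_Icc] at hy
        rw [(key y (lt_trans hy.2 hx1)).deriv]
        have := ih (a + 1) (by linarith) y (le_of_lt hy.1) (lt_trans hy.2 hx1)
        have h2 : (0:ℝ) ≤ (1 - y) ^ (-(a + 1)) -
            ∑ i ∈ range N, (∏ j ∈ range i, ((a + 1) + j)) / (i.factorial : ℝ) * y ^ i := by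
          linarith
        positivity
    have := hmono (Set.left_mem_Icc.mpr hx0) (Set.right_mem_Icc.mpr hx0) hx0
    rw [hF0] at this
    simpa [hF, sub_nonneg] using this

/-- For `0 ≤ β < 1` and complex `s`, the series of absolute values of the rising-factorial
coefficients satisfies `∑_{i≥0} |s(s+1)⋯(s+i-1)|/i! · β^i ≤ (1−β)^{-|s|}`. -/
theorem pochhammer_abs_series_bound (β : ℝ) (hβ0 : 0 ≤ β) (hβ : β < 1) (s : ℂ) :
    Summable (fun i : ℕ => ‖∏ j ∈ Finset.range i, (s + j)‖ / (i.factorial : ℝ)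
      * β ^ i) ∧
    ∑' i : ℕ, ‖∏ j ∈ Finset.range i, (s + j)‖ / (i.factorial : ℝ) * β ^ i ≤
      (1 - β) ^ (-‖s‖) := by
  set a := ‖s‖ with ha
  have ha0 : 0 ≤ a := norm_nonneg s
  set g : ℕ → ℝ := fun i => (∏ j ∈ range i, (a + j)) / (i.factorial : ℝ) * β ^ i with hg
  set f : ℕ → ℝ := fun i =>
    ‖∏ j ∈ Finset.range i, (s + j)‖ / (i.factorial : ℝ) * β ^ i with hf
  have hf0 : ∀ i, 0 ≤ f i := by intro i; positivity
  have hg0 : ∀ i, 0 ≤ g i := by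
    intro i
    have : 0 ≤ ∏ j ∈ range i, (a + (j : ℝ)) :=
      Finset.prod_nonneg fun j _ => by positivity
    positivity
  have hfg : ∀ i, f i ≤ g i := by
    intro i
    have habs : ‖∏ j ∈ Finset.range i, (s + j)‖ ≤ ∏ j ∈ range i, (a + (j : ℝ)) := by
      rw [norm_prod]
      refine Finset.prod_le_prod (fun j _ => norm_nonneg _) fun j _ => ?_
      calc ‖s + j‖ ≤ ‖s‖ + ‖(j : ℂ)‖ := norm_add_le _ _
        _ = a + j := by rw [Complex.norm_natCast]
    have h1 : 0 ≤ (i.factorial : ℝ) := by positivity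
    have h2 : 0 ≤ β ^ i := by positivity
    exact mul_le_mul_of_nonneg_right (div_le_div_of_nonneg_right habs (by positivity) |>.trans_eq rfl) h2
  have hbound : ∀ N, ∑ i ∈ range N, g i ≤ (1 - β) ^ (-a) :=
    fun N => rising_partial_le N a ha0 β hβ0 hβ
  have hgsum : Summable g := summable_of_sum_range_le hg0 hbound
  have hfsum : Summable f := hgsum.of_nonneg_of_le hf0 hfg
  refine ⟨hfsum, ?_⟩
  calc ∑' i, f i ≤ ∑' i, g i := Summable.tsum_le_tsum hfg hfsum hgsum
    _ ≤ (1 - β) ^ (-a) := Summable.tsum_le_of_sum_range_le hgsum hbound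
end
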